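/- arXiv:1312.2752 — 13 statements merged into one kernel-verified Lean document; each statement's English description precedes it below -/
import Mathlib

section
/- Let A be an m-th order n-dimensional circulant tensor with row tensors A_k (k ∈ [n]) and let P be the cyclic permutation matrix with P_{j,j+1}=1 for j∈[n-1], P_{n,1}=1 and zeros elsewhere. Then for all k ∈ [n], A_{k+1} = A_k P^{m-1} (with A_{n+1} := A_1), where (A_k P^{m-1})_{j_1...j_{m-1}} = Σ_{i_1,...,i_{m-1}} (A_k)_{i_1...i_{m-1}} P_{i_1 j_1}··· P_{i_{m-1} j_{m-1}}. -/
open BigOperators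

/-- For a circulant tensor `A` of order `m+1` and dimension `n`, with row tensors
`A_k = (a_{k j_1 ... j_m})` and `P` the cyclic permutation matrix, we have
`A_{k+1} = A_k P^m` (indices mod `n`). -/
theorem stmt_1 (m n : ℕ) [NeZero n] (A : (Fin (m + 1) → Fin n) → ℝ)
    (hA : ∀ j : Fin (m + 1) → Fin n, A j = A (fun l => j l + 1))
    (P : Fin n → Fin n → ℝ) (hP : ∀ a b : Fin n, P a b = if b = a + 1 then 1 else 0)
    (k : Fin n) (j : Fin m → Fin n) :
    A (Fin.cons (k + 1) j) = ∑ i : Fin m → Fin n, A (Fin.cons k i) * ∏ l, P (i l) (j l) := by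
  have h1 : A (Fin.cons (k + 1) j) = A (Fin.cons k (fun l => j l - 1)) := by
    rw [hA (Fin.cons k (fun l => j l - 1))]
    congr 1
    funext l
    refine Fin.cases ?_ ?_ l <;> simp
  rw [h1, Finset.sum_eq_single (fun l => j l - 1)]
  · simp [hP]
  · intro i _ hi
    have : ∃ l, i l ≠ j l - 1 := by
      by_contra h; push_neg at h; exact hi (funext h)
    obtain ⟨l, hl⟩ := this
    have hz : P (i l) (j l) = 0 := by
      rw [hP, if_neg]
      intro h
      exact hl (by rw [h]; simp)
    rw [Finset.prod_eq_zero (Finset.mem_univ l) hz, mul_zero]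
  · intro h; exact absurd (Finset.mem_univ _) h
end

section
/- Let A be an m-th order n-dimensional real tensor and P the cyclic permutation matrix (P_{j,j+1}=1 for j∈[n-1], P_{n,1}=1, zeros elsewhere). Then the following are equivalent: (a) A is circulant; (b) A P^m = A; (c) for every n×n circulant matrix C, the tensor A C^m is circulant. -/
open BigOperators

/-- For `A ∈ T_{m,n}` and the cyclic permutation matrix `P`, the following are equivalent:
(a) `A` is circulant; (b) `A Pᵐ = A`; (c) for every circulant matrix `C`,
the tensor `A Cᵐ` is circulant. -/
theorem stmt_2 (m n : ℕ) [NeZero n] (A : (Fin m → Fin n) → ℝ)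
    (P : Fin n → Fin n → ℝ) (hP : ∀ a b : Fin n, P a b = if b = a + 1 then 1 else 0) :
    List.TFAE
      [(∀ j : Fin m → Fin n, A j = A (fun l => j l + 1)),
       (∀ k : Fin m → Fin n, (∑ j : Fin m → Fin n, A j * ∏ l, P (j l) (k l)) = A k),
       (∀ C : Fin n → Fin n → ℝ, (∀ a b : Fin n, C a b = C (a + 1) (b + 1)) →
          ∀ k : Fin m → Fin n,
            (∑ j : Fin m → Fin n, A j * ∏ l, C (j l) (k l))
              = ∑ j : Fin m → Fin n, A j * ∏ l, C (j l) (k l + 1))] := by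
  have key : ∀ k : Fin m → Fin n,
      (∑ j : Fin m → Fin n, A j * ∏ l, P (j l) (k l)) = A (fun l => k l - 1) := by
    intro k
    rw [Finset.sum_eq_single (fun l => k l - 1)]
    · simp [hP, sub_add_cancel]
    · intro j _ hj
      obtain ⟨l, hl⟩ := Function.ne_iff.mp hj
      have h0 : P (j l) (k l) = 0 := by
        rw [hP, if_neg]
        intro h
        exact hl (by simp [h])
      rw [Finset.prod_eq_zero (Finset.mem_univ l) h0, mul_zero]
    · intro h; exact absurd (Finset.mem_univ _) h
  tfae_have 1 → 3 := by
    intro ha C hC k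
    refine Fintype.sum_equiv
      (Equiv.piCongrRight fun _ => Equiv.addRight (1 : Fin n)) _ _ ?_
    intro j
    have : A ((Equiv.piCongrRight fun _ => Equiv.addRight (1 : Fin n)) j)
        = A j := by
      rw [ha j]; rfl
    rw [this]
    congr 1
    exact Finset.prod_congr rfl fun l _ => hC (j l) (k l)
  tfae_have 3 → 2 := by
    intro hc k
    have hPc : ∀ a b : Fin n, P a b = P (a + 1) (b + 1) := by
      intro a b
      rw [hP, hP]
      simp [add_left_inj]
    have h := hc P hPc k
    rw [key, key] at h
    rw [key, h]
    congr 1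
    funext l
    simp
  tfae_have 2 → 1 := by
    intro hb j
    have h := hb (fun l => j l + 1)
    rw [key] at h
    simpa using h
  tfae_finish
end

section
/- Let A be an m-th order n-dimensional circulant tensor with associated polynomial f_A. Then for each k with 0 ≤ k ≤ n−1, the vector v_k = (1, ω_k, ω_k², ..., ω_k^{n−1})ᵀ with ω_k = e^{2πik/n} is an eigenvector of A with eigenvalue λ_k = f_A(ω_k), i.e., A v_k^{m-1} = λ_k v_k^{[m-1]}. -/
open BigOperators

/-- For a circulant tensor `A` of order `m+1`, the vectors `v_k = (1, ω_k, ..., ω_k^{n-1})`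
with `ω_k = e^{2πik/n}` are eigenvectors of `A`, with eigenvalue `λ_k = f_A(ω_k)` where
`f_A` is the associated polynomial: `A v_k^{m} = λ_k v_k^{[m]}`. -/
theorem stmt_3 (m n : ℕ) [NeZero n] (A : (Fin (m + 1) → Fin n) → ℝ)
    (hA : ∀ j : Fin (m + 1) → Fin n, A j = A (fun l => j l + 1)) (k : Fin n) :
    ∀ j : Fin n,
      (∑ t : Fin m → Fin n, (A (Fin.cons j t) : ℂ) *
          ∏ l, Complex.exp (2 * (Real.pi : ℂ) * Complex.I * (k : ℕ) / (n : ℕ)) ^ (t l : ℕ))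
        = (∑ t : Fin m → Fin n, (A (Fin.cons 0 t) : ℂ) *
              Complex.exp (2 * (Real.pi : ℂ) * Complex.I * (k : ℕ) / (n : ℕ)) ^ (∑ l, (t l : ℕ)))
            * (Complex.exp (2 * (Real.pi : ℂ) * Complex.I * (k : ℕ) / (n : ℕ)) ^ (j : ℕ)) ^ m := by
  intro j
  set ω : ℂ := Complex.exp (2 * (Real.pi : ℂ) * Complex.I * (k : ℕ) / (n : ℕ)) with hωdef
  have hn : (n : ℂ) ≠ 0 := Nat.cast_ne_zero.mpr (NeZero.ne n)
  have hωn : ω ^ n = 1 := by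
    rw [hωdef, ← Complex.exp_nat_mul]
    have h1 : (n : ℂ) * (2 * (Real.pi : ℂ) * Complex.I * (k : ℕ) / (n : ℕ))
        = ((k : ℤ) : ℂ) * (2 * Real.pi * Complex.I) := by
      push_cast; field_simp
    rw [h1, Complex.exp_int_mul_two_pi_mul_I]
  have hmod : ∀ a : ℕ, ω ^ (a % n) = ω ^ a := fun a => (pow_eq_pow_mod a hωn).symm
  have hadd : ∀ a b : Fin n, ω ^ ((a + b) : Fin n).val = ω ^ (a : ℕ) * ω ^ (b : ℕ) := by
    intro a b
    rw [Fin.val_add, hmod, pow_add]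
  open Fin.NatCast in
  have hshift : ∀ (c : ℕ) (x : Fin (m+1) → Fin n), A x = A (fun l => x l + (c : Fin n)) := by
    intro c
    induction c with
    | zero => intro x; simp
    | succ c ih =>
      intro x
      rw [ih x, hA]
      congr 1; funext l; push_cast; abel
  have hAshift : ∀ (t : Fin m → Fin n),
      A (Fin.cons j t) = A (Fin.cons 0 (fun l => t l - j)) := by
    intro t
    rw [hshift ((-j : Fin n)).val (Fin.cons j t)]
    congr 1
    funext l
    rw [Fin.cast_val_eq_self]
    refine Fin.cases ?_ ?_ l
    · simp
    · intro i; simp [Fin.cons_succ, sub_eq_add_neg]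
  have key : (∑ t : Fin m → Fin n, (A (Fin.cons j t) : ℂ) * ∏ l, ω ^ (t l : ℕ))
      = ∑ s : Fin m → Fin n, (A (Fin.cons 0 s) : ℂ) * ∏ l, ω ^ ((s l + j : Fin n) : ℕ) := by
    refine Fintype.sum_equiv (Equiv.piCongrRight (fun _ => Equiv.subRight j)) _ _ ?_
    intro t
    rw [hAshift t]
    simp only [Equiv.piCongrRight, Equiv.subRight, Equiv.coe_fn_mk, Pi.map_apply,
      sub_add_cancel]
    rfl
  rw [key, Finset.sum_mul]
  refine Finset.sum_congr rfl ?_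
  intro s _
  have : (∏ l, ω ^ ((s l + j : Fin n) : ℕ)) = (∏ l, ω ^ ((s l : ℕ))) * (ω ^ (j : ℕ)) ^ m := by
    simp only [hadd, Finset.prod_mul_distrib, Finset.prod_const, Finset.card_univ,
      Fintype.card_fin]
  rw [this, Finset.prod_pow_eq_pow_sum]
  ring
end

section
/- Let n be even and A an m-th order n-dimensional circulant tensor with root tensor A_1 = (α_{j_1...j_{m-1}}). Then λ_{n/2}(A) = Σ_{j_1,...,j_{m-1}} α_{j_1...j_{m-1}} (−1)^{j_1+···+j_{m-1}−m+1} is an H-eigenvalue of A with H-eigenvector the alternating-sign vector (1,−1,1,−1,...)ᵀ ∈ ℝ^n. -/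
open BigOperators
open Fin.NatCast

lemma neg_one_pow_mod (n a : ℕ) (hn : Even n) : (-1:ℝ)^(a % n) = (-1)^a := by
  conv_rhs => rw [← Nat.div_add_mod a n]
  rw [pow_add, pow_mul, hn.neg_one_pow, one_pow, one_mul]

lemma neg_one_pow_succ {n : ℕ} [NeZero n] (hn : Even n) (x : Fin n) :
    (-1:ℝ)^(((x + 1 : Fin n)):ℕ) = -(-1:ℝ)^(x:ℕ) := by
  have : ((x + 1 : Fin n) : ℕ) = (x + 1) % n := by
    simp [Fin.add_def]
  rw [this, neg_one_pow_mod n _ hn, pow_succ]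
  ring

/-- If `n` is even, a circulant tensor `A` of order `m+1` has the H-eigenvalue
`λ_{n/2}(A) = ∑ α_{j_1...j_m} (−1)^{j_1+⋯+j_m−m}` (0-based exponents), with H-eigenvector
the alternating-sign vector `(1,−1,1,−1,...)ᵀ`. -/
theorem stmt_6 (m n : ℕ) [NeZero n] (hn : Even n) (A : (Fin (m + 1) → Fin n) → ℝ)
    (hA : ∀ j : Fin (m + 1) → Fin n, A j = A (fun l => j l + 1)) :
    ∀ j : Fin n,
      ∑ t : Fin m → Fin n, A (Fin.cons j t) * ∏ l, (-1 : ℝ) ^ (t l : ℕ)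
        = (∑ t : Fin m → Fin n, A (Fin.cons 0 t) * (-1 : ℝ) ^ (∑ l, (t l : ℕ)))
            * ((-1 : ℝ) ^ (j : ℕ)) ^ m := by
  set S : Fin n → ℝ := fun j => ∑ t : Fin m → Fin n, A (Fin.cons j t) * ∏ l, (-1 : ℝ) ^ (t l : ℕ)
    with hS
  have key : ∀ j : Fin n, S j = (-1:ℝ)^m * S (j + 1) := by
    intro j
    rw [hS]
    simp only
    rw [Fintype.sum_bijective (fun (t : Fin m → Fin n) => fun l => t l + 1)
      (Equiv.piCongrRight (fun _ : Fin m => Equiv.addRight (1 : Fin n))).bijective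
      _ (fun s => A (Fin.cons (j + 1) s) * ∏ l, -(-1:ℝ)^(s l : ℕ))]
    · rw [← Finset.sum_congr rfl (fun s _ => rfl)]
      have : ∀ s : Fin m → Fin n,
          A (Fin.cons (j + 1) s) * ∏ l, -(-1:ℝ)^(s l : ℕ)
            = (-1:ℝ)^m * (A (Fin.cons (j + 1) s) * ∏ l, (-1:ℝ)^(s l : ℕ)) := by
        intro s
        rw [show (∏ l, -(-1:ℝ)^(s l : ℕ)) = ∏ l, (-1:ℝ) * (-1:ℝ)^(s l : ℕ) by
          exact Finset.prod_congr rfl (fun l _ => by ring),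
          Finset.prod_mul_distrib, Finset.prod_const]
        simp [mul_comm, mul_assoc, mul_left_comm]
      rw [Finset.sum_congr rfl (fun s _ => this s), ← Finset.mul_sum]
    · intro t
      have hAeq : A (Fin.cons j t) = A (Fin.cons (j + 1) (fun l => t l + 1)) := by
        rw [hA (Fin.cons j t)]
        congr 1
        funext l
        refine Fin.cases ?_ ?_ l <;> simp
      rw [hAeq]
      congr 1
      refine Finset.prod_congr rfl (fun l _ => ?_)
      show (-1:ℝ) ^ (t l : ℕ) = -(-1:ℝ) ^ ((t l + 1 : Fin n) : ℕ)
      rw [neg_one_pow_succ hn (t l)]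
      ring
  have step : ∀ j : Fin n, S (j + 1) = (-1:ℝ)^m * S j := by
    intro j
    rw [key j, ← mul_assoc, ← pow_add, Even.neg_one_pow ⟨m, (two_mul m).symm ▸ rfl⟩, one_mul]
  have iter : ∀ k : ℕ, S ((0 : Fin n) + (k : Fin n)) = ((-1:ℝ)^m)^k * S 0 := by
    intro k
    induction k with
    | zero => simp
    | succ k ih =>
      have : ((0 : Fin n) + ((k+1 : ℕ) : Fin n)) = ((0 : Fin n) + (k : Fin n)) + 1 := by
        push_cast; abel
      rw [this, step, ih, pow_succ]; ring
  intro j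
  show S j = _
  have hj : ((j : ℕ) : Fin n) = j := Fin.cast_val_eq_self j
  have := iter (j : ℕ)
  rw [hj, zero_add] at this
  have hS0 : S 0 = ∑ t : Fin m → Fin n, A (Fin.cons 0 t) * (-1 : ℝ) ^ (∑ l, (t l : ℕ)) := by
    rw [hS]
    refine Finset.sum_congr rfl (fun t _ => ?_)
    rw [Finset.prod_pow_eq_pow_sum]
  rw [this, hS0, pow_right_comm, mul_comm]
end

section
/- Let A be a circulant tensor whose associated tensor Ā_1 is nonnegative (all entries ≥ 0). Then λ_0(A), the sum of all entries of the root tensor, is the largest H-eigenvalue of A. If instead Ā_1 is non-positive, λ_0(A) is the smallest H-eigenvalue of A. -/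
open BigOperators

/-- `λ` is an H-eigenvalue of the order-`(m+1)` tensor `A` if `A x^m = λ x^{[m]}` for some
real `x ≠ 0`. -/
def IsHEig (m n : ℕ) (A : (Fin (m + 1) → Fin n) → ℝ) (lam : ℝ) : Prop :=
  ∃ x : Fin n → ℝ, x ≠ 0 ∧ ∀ j : Fin n,
    ∑ t : Fin m → Fin n, A (Fin.cons j t) * ∏ l, x (t l) = lam * x j ^ m

section aux
variable {m n : ℕ} [NeZero n] {A : (Fin (m + 1) → Fin n) → ℝ}
variable (hA : ∀ j : Fin (m + 1) → Fin n, A j = A (fun l => j l + 1))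
include hA

open Fin.NatCast in
lemma shiftN (k : ℕ) (v : Fin (m + 1) → Fin n) :
    A v = A (fun l => v l + (k : Fin n)) := by
  induction k with
  | zero => simp
  | succ k ih =>
    rw [ih, hA (fun l => v l + (k : Fin n))]
    congr 1
    funext l
    push_cast
    abel

open Fin.NatCast in
lemma shiftF (k : Fin n) (v : Fin (m + 1) → Fin n) :
    A v = A (fun l => v l + k) := by
  have := shiftN hA k.val v
  rwa [Fin.cast_val_eq_self] at this

lemma key (j : Fin n) (t : Fin m → Fin n) :
    A (Fin.cons j t) = A (Fin.cons 0 (fun l => t l - j)) := by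
  rw [shiftF hA (-j) (Fin.cons j t)]
  congr 1
  funext l
  refine Fin.cases ?_ (fun i => ?_) l <;> simp [sub_eq_add_neg]

lemma rowSum (x : Fin n → ℝ) (j : Fin n) :
    ∑ t : Fin m → Fin n, A (Fin.cons j t) * ∏ l, x (t l)
      = ∑ s : Fin m → Fin n, A (Fin.cons 0 s) * ∏ l, x (s l + j) := by
  refine (Fintype.sum_equiv (Equiv.piCongrRight fun _ : Fin m => Equiv.addRight j)
    _ _ fun s => ?_).symm
  have h1 : A (Fin.cons j ((Equiv.piCongrRight fun _ : Fin m => Equiv.addRight j) s))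
      = A (Fin.cons 0 s) := by
    rw [key hA]
    congr 1
    funext l
    simp [Equiv.piCongrRight, Equiv.addRight]
  simp only [h1]
  congr 1

lemma eig0 : IsHEig m n A (∑ t : Fin m → Fin n, A (Fin.cons 0 t)) := by
  have npos : 0 < n := Nat.pos_of_ne_zero (NeZero.ne n)
  refine ⟨fun _ => 1, ?_, fun j => ?_⟩
  · intro h
    have := congrFun h ⟨0, npos⟩
    simp at this
  · simp only [Finset.prod_const_one, mul_one, one_pow]
    have := rowSum hA (fun _ => (1:ℝ)) j
    simpa using this

lemma gersh {lam : ℝ} (hlam : IsHEig m n A lam) :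
    |lam - A (Fin.cons 0 (fun _ => 0))| ≤
      ∑ s ∈ Finset.univ.erase (fun _ => (0 : Fin n)), |A (Fin.cons 0 s)| := by
  have npos : 0 < n := Nat.pos_of_ne_zero (NeZero.ne n)
  have : Nonempty (Fin n) := ⟨⟨0, npos⟩⟩
  obtain ⟨x, hx, heq⟩ := hlam
  obtain ⟨j, -, hj⟩ := Finset.exists_max_image Finset.univ (fun i => |x i|)
    ⟨⟨0, npos⟩, Finset.mem_univ _⟩
  have hxj : x j ≠ 0 := by
    obtain ⟨i, hi⟩ := Function.ne_iff.mp hx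
    intro h0
    have := hj i (Finset.mem_univ i)
    rw [h0, abs_zero] at this
    exact hi (abs_nonpos_iff.mp this)
  set c := A (Fin.cons 0 (fun _ => (0 : Fin n))) with hc
  have hrow := (heq j).symm.trans (rowSum hA x j)
  -- split off the s = const 0 term
  have hsplit : (∑ s ∈ Finset.univ.erase (fun _ => (0:Fin n)),
        A (Fin.cons 0 s) * ∏ l, x (s l + j)) + c * ∏ l : Fin m, x ((0:Fin n) + j)
      = ∑ s : Fin m → Fin n, A (Fin.cons 0 s) * ∏ l, x (s l + j) :=
    Finset.sum_erase_add _ _ (Finset.mem_univ _)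
  have hprodj : (∏ l : Fin m, x ((0:Fin n) + j)) = x j ^ m := by
    simp [Finset.prod_const]
  rw [hprodj] at hsplit
  have hmain : (lam - c) * x j ^ m
      = ∑ s ∈ Finset.univ.erase (fun _ => (0:Fin n)), A (Fin.cons 0 s) * ∏ l, x (s l + j) := by
    have := hsplit
    rw [← hrow] at this
    linarith
  have habs : |lam - c| * |x j| ^ m
      ≤ (∑ s ∈ Finset.univ.erase (fun _ => (0:Fin n)), |A (Fin.cons 0 s)|) * |x j| ^ m := by
    have h1 : |lam - c| * |x j| ^ m = |(lam - c) * x j ^ m| := by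
      rw [abs_mul, abs_pow]
    rw [h1, hmain]
    refine (Finset.abs_sum_le_sum_abs _ _).trans ?_
    rw [Finset.sum_mul]
    refine Finset.sum_le_sum fun s _ => ?_
    rw [abs_mul]
    refine mul_le_mul_of_nonneg_left ?_ (abs_nonneg _)
    rw [Finset.abs_prod]
    calc ∏ l, |x (s l + j)| ≤ ∏ l : Fin m, |x j| :=
          Finset.prod_le_prod (fun _ _ => abs_nonneg _)
            (fun l _ => hj _ (Finset.mem_univ _))
      _ = |x j| ^ m := by simp [Finset.prod_const]
  have hpos : (0:ℝ) < |x j| ^ m := pow_pos (abs_pos.mpr hxj) m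
  exact le_of_mul_le_mul_right habs hpos

end aux

/-- If the associated tensor of a circulant tensor `A` is nonnegative, then
`λ₀(A) = ∑ α_{j_1...j_m}` is the largest H-eigenvalue of `A`; if the associated tensor is
non-positive, then `λ₀(A)` is the smallest H-eigenvalue of `A`. -/
theorem stmt_7 (m n : ℕ) [NeZero n] (A : (Fin (m + 1) → Fin n) → ℝ)
    (hA : ∀ j : Fin (m + 1) → Fin n, A j = A (fun l => j l + 1)) :
    ((∀ t : Fin m → Fin n, t ≠ (fun _ => 0) → 0 ≤ A (Fin.cons 0 t)) →
      IsHEig m n A (∑ t : Fin m → Fin n, A (Fin.cons 0 t)) ∧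
        ∀ lam : ℝ, IsHEig m n A lam → lam ≤ ∑ t : Fin m → Fin n, A (Fin.cons 0 t)) ∧
    ((∀ t : Fin m → Fin n, t ≠ (fun _ => 0) → A (Fin.cons 0 t) ≤ 0) →
      IsHEig m n A (∑ t : Fin m → Fin n, A (Fin.cons 0 t)) ∧
        ∀ lam : ℝ, IsHEig m n A lam → (∑ t : Fin m → Fin n, A (Fin.cons 0 t)) ≤ lam) := by
  set c := A (Fin.cons 0 (fun _ => (0 : Fin n))) with hc
  have hsplit : (∑ t ∈ Finset.univ.erase (fun _ => (0:Fin n)), A (Fin.cons 0 t)) + c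
      = ∑ t : Fin m → Fin n, A (Fin.cons 0 t) :=
    Finset.sum_erase_add _ _ (Finset.mem_univ _)
  constructor
  · intro hpos
    refine ⟨eig0 hA, fun lam hl => ?_⟩
    have hg := gersh hA hl
    have hR : (∑ s ∈ Finset.univ.erase (fun _ => (0:Fin n)), |A (Fin.cons 0 s)|)
        = ∑ s ∈ Finset.univ.erase (fun _ => (0:Fin n)), A (Fin.cons 0 s) :=
      Finset.sum_congr rfl fun s hs =>
        abs_of_nonneg (hpos s (Finset.ne_of_mem_erase hs))
    rw [hR] at hg
    have := abs_le.mp hg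
    linarith [this.2]
  · intro hneg
    refine ⟨eig0 hA, fun lam hl => ?_⟩
    have hg := gersh hA hl
    have hR : (∑ s ∈ Finset.univ.erase (fun _ => (0:Fin n)), |A (Fin.cons 0 s)|)
        = -∑ s ∈ Finset.univ.erase (fun _ => (0:Fin n)), A (Fin.cons 0 s) := by
      rw [← Finset.sum_neg_distrib]
      exact Finset.sum_congr rfl fun s hs =>
        abs_of_nonpos (hneg s (Finset.ne_of_mem_erase hs))
    rw [hR] at hg
    have := abs_le.mp hg
    linarith [this.1]
end

section
/- Let n be even and A ∈ C_{m,n} a circulant tensor whose associated tensor Ā_1 is alternative. Then the alternative native eigenvalue λ_{n/2}(A) = Σ ᾱ_{j_1...j_{m-1}}(−1)^{j_1+···+j_{m-1}−m+1} + c_0 is the largest H-eigenvalue of A. If Ā_1 is negatively alternative, λ_{n/2}(A) is the smallest H-eigenvalue of A. -/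
open BigOperators

section Aux

variable {m n : ℕ} [NeZero n]

lemma aux_sign_add (hn : Even n) (a b : Fin n) :
    ((-1 : ℝ)) ^ ((a + b : Fin n) : ℕ) = (-1 : ℝ) ^ (a : ℕ) * (-1 : ℝ) ^ (b : ℕ) := by
  rw [← pow_add, neg_one_pow_eq_pow_mod_two ((a : ℕ) + b),
    neg_one_pow_eq_pow_mod_two ((a + b : Fin n) : ℕ)]
  congr 1
  rw [Fin.val_add, Nat.mod_mod_of_dvd _ hn.two_dvd]

open Fin.NatCast in
lemma aux_shift (A : (Fin (m + 1) → Fin n) → ℝ)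
    (hA : ∀ j : Fin (m + 1) → Fin n, A j = A (fun l => j l + 1))
    (w : Fin (m + 1) → Fin n) (c : Fin n) : A w = A (fun l => w l + c) := by
  have key : ∀ k : ℕ, A w = A (fun l => w l + (k : Fin n)) := by
    intro k
    induction k with
    | zero => simp
    | succ k ih =>
      rw [ih, hA (fun l => w l + (k : Fin n))]
      congr 1
      funext l
      push_cast
      exact add_assoc _ _ _
  simpa [Fin.cast_val_eq_self] using key (c : ℕ)

lemma aux_cons_shift (A : (Fin (m + 1) → Fin n) → ℝ)
    (hA : ∀ j : Fin (m + 1) → Fin n, A j = A (fun l => j l + 1))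
    (j a : Fin n) (t : Fin m → Fin n) :
    A (Fin.cons a t) = A (Fin.cons (a + j) fun l => t l + j) := by
  rw [aux_shift A hA (Fin.cons a t) j]
  congr 1
  funext i
  refine Fin.cases ?_ (fun i => ?_) i <;> simp

lemma aux_sum_shift (j : Fin n) (g : (Fin m → Fin n) → ℝ) :
    ∑ t : Fin m → Fin n, g (fun l => t l + j) = ∑ t : Fin m → Fin n, g t := by
  apply Fintype.sum_equiv (Equiv.piCongrRight fun _ => Equiv.addRight j)
  intro t
  rfl

/-- the eigen-equation for the alternating vector. -/
lemma aux_eig (hn : Even n) (A : (Fin (m + 1) → Fin n) → ℝ)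
    (hA : ∀ j : Fin (m + 1) → Fin n, A j = A (fun l => j l + 1)) (j : Fin n) :
    ∑ t : Fin m → Fin n, A (Fin.cons j t) * ∏ l, (-1 : ℝ) ^ ((t l : ℕ)) =
      (∑ t : Fin m → Fin n, A (Fin.cons 0 t) * (-1 : ℝ) ^ (∑ l, (t l : ℕ))) *
        ((-1 : ℝ) ^ (j : ℕ)) ^ m := by
  rw [Finset.sum_mul]
  refine (Fintype.sum_equiv (Equiv.piCongrRight fun _ => Equiv.addRight j) _ _ ?_).symm
  intro t
  have h1 : A (Fin.cons 0 t) = A (Fin.cons j fun l => t l + j) := by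
    simpa using aux_cons_shift A hA j 0 t
  have h2 : ∏ l, (-1 : ℝ) ^ (((t l + j : Fin n) : ℕ)) =
      (-1 : ℝ) ^ (∑ l, (t l : ℕ)) * ((-1 : ℝ) ^ (j : ℕ)) ^ m := by
    simp only [aux_sign_add hn]
    rw [Finset.prod_mul_distrib, Finset.prod_pow_eq_pow_sum, Finset.prod_const]
    simp
  show A (Fin.cons 0 t) * (-1 : ℝ) ^ (∑ l, (t l : ℕ)) * ((-1 : ℝ) ^ (j : ℕ)) ^ m =
      A (Fin.cons j fun l => t l + j) * ∏ l, (-1 : ℝ) ^ (((t l + j : Fin n) : ℕ))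
  rw [h1, h2]; ring

lemma aux_gershgorin (A : (Fin (m + 1) → Fin n) → ℝ)
    (hA : ∀ j : Fin (m + 1) → Fin n, A j = A (fun l => j l + 1)) (lam : ℝ)
    (h : IsHEig m n A lam) :
    |lam - A (Fin.cons 0 fun _ => 0)| ≤
      ∑ t ∈ Finset.univ.erase (fun _ => (0 : Fin n)), |A (Fin.cons (0 : Fin n) t)| := by
  obtain ⟨x, hx, hxe⟩ := h
  obtain ⟨j0, -, hj0⟩ := Finset.exists_max_image Finset.univ (fun j => |x j|) ⟨0, Finset.mem_univ _⟩
  have hpos : 0 < |x j0| := by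
    obtain ⟨j, hj⟩ := Function.ne_iff.mp hx
    exact lt_of_lt_of_le (abs_pos.mpr hj) (hj0 j (Finset.mem_univ _))
  set c0 := A (Fin.cons 0 fun _ => (0 : Fin n)) with hc0
  have hdiag : A (Fin.cons j0 fun _ => j0) = c0 := by
    have := aux_cons_shift A hA j0 0 (fun _ => (0 : Fin n))
    simpa using this.symm
  have heq := hxe j0
  have hsplit : (lam - c0) * x j0 ^ m =
      ∑ t ∈ Finset.univ.erase (fun _ => j0), A (Fin.cons j0 t) * ∏ l, x (t l) := by
    rw [Finset.sum_erase_eq_sub (Finset.mem_univ _), heq, hdiag]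
    simp [Finset.prod_const]
    ring
  have habs : |lam - c0| * |x j0| ^ m ≤
      ∑ t ∈ Finset.univ.erase (fun _ => j0), |A (Fin.cons j0 t)| * |x j0| ^ m := by
    calc |lam - c0| * |x j0| ^ m = |(lam - c0) * x j0 ^ m| := by
            rw [abs_mul, abs_pow]
      _ ≤ ∑ t ∈ Finset.univ.erase (fun _ => j0), |A (Fin.cons j0 t) * ∏ l, x (t l)| := by
            rw [hsplit]; exact Finset.abs_sum_le_sum_abs _ _
      _ ≤ _ := by
            refine Finset.sum_le_sum fun t _ => ?_
            rw [abs_mul]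
            refine mul_le_mul_of_nonneg_left ?_ (abs_nonneg _)
            rw [Finset.abs_prod]
            calc ∏ l, |x (t l)| ≤ ∏ l : Fin m, |x j0| :=
                  Finset.prod_le_prod (fun _ _ => abs_nonneg _)
                    (fun l _ => hj0 (t l) (Finset.mem_univ _))
              _ = |x j0| ^ m := by simp [Finset.prod_const]
  have hsum : ∑ t ∈ Finset.univ.erase (fun _ => j0), |A (Fin.cons j0 t)| =
      ∑ t ∈ Finset.univ.erase (fun _ => (0 : Fin n)), |A (Fin.cons (0 : Fin n) t)| := by
    rw [Finset.sum_erase_eq_sub (Finset.mem_univ _),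
      Finset.sum_erase_eq_sub (Finset.mem_univ _), hdiag]
    congr 1
    refine (Fintype.sum_equiv (Equiv.piCongrRight fun _ => Equiv.addRight j0) _ _ ?_).symm
    intro t
    have h1 : A (Fin.cons 0 t) = A (Fin.cons j0 fun l => t l + j0) := by
      simpa using aux_cons_shift A hA j0 0 t
    show |A (Fin.cons (0 : Fin n) t)| = |A (Fin.cons j0 fun l => t l + j0)|
    rw [h1]
  rw [← hsum]
  have := habs
  rw [← Finset.sum_mul] at this
  have hp : (0 : ℝ) < |x j0| ^ m := pow_pos hpos m
  exact le_of_mul_le_mul_right this hp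

end Aux

/-- Let `n` be even and `A ∈ C_{m+1,n}` circulant. If the associated tensor `Ā₁` is
alternative, the alternative native eigenvalue
`λ_{n/2}(A) = ∑ α_{j_1...j_m}(−1)^{j_1+⋯+j_m−m}` is the largest H-eigenvalue of `A`;
if `Ā₁` is negatively alternative, `λ_{n/2}(A)` is the smallest H-eigenvalue of `A`. -/
theorem stmt_10 (m n : ℕ) [NeZero n] (hn : Even n) (A : (Fin (m + 1) → Fin n) → ℝ)
    (hA : ∀ j : Fin (m + 1) → Fin n, A j = A (fun l => j l + 1)) :
    ((∀ t : Fin m → Fin n, t ≠ (fun _ => 0) →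
        0 ≤ A (Fin.cons 0 t) * (-1 : ℝ) ^ (∑ l, (t l : ℕ))) →
      IsHEig m n A (∑ t : Fin m → Fin n, A (Fin.cons 0 t) * (-1 : ℝ) ^ (∑ l, (t l : ℕ))) ∧
        ∀ lam : ℝ, IsHEig m n A lam →
          lam ≤ ∑ t : Fin m → Fin n, A (Fin.cons 0 t) * (-1 : ℝ) ^ (∑ l, (t l : ℕ))) ∧
    ((∀ t : Fin m → Fin n, t ≠ (fun _ => 0) →
        A (Fin.cons 0 t) * (-1 : ℝ) ^ (∑ l, (t l : ℕ)) ≤ 0) →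
      IsHEig m n A (∑ t : Fin m → Fin n, A (Fin.cons 0 t) * (-1 : ℝ) ^ (∑ l, (t l : ℕ))) ∧
        ∀ lam : ℝ, IsHEig m n A lam →
          (∑ t : Fin m → Fin n, A (Fin.cons 0 t) * (-1 : ℝ) ^ (∑ l, (t l : ℕ))) ≤ lam) := by
  set lamstar := ∑ t : Fin m → Fin n, A (Fin.cons 0 t) * (-1 : ℝ) ^ (∑ l, (t l : ℕ)) with hls
  set c0 := A (Fin.cons 0 fun _ => (0 : Fin n)) with hc0
  -- λ* is always an H-eigenvalue
  have heig : IsHEig m n A lamstar := by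
    refine ⟨fun j => (-1 : ℝ) ^ (j : ℕ), ?_, ?_⟩
    · intro h
      have := congrFun h 0
      simp at this
    · intro j
      exact aux_eig hn A hA j
  -- splitting λ* at the diagonal term
  have hsplit : lamstar = c0 + ∑ t ∈ Finset.univ.erase (fun _ => (0 : Fin n)),
      A (Fin.cons 0 t) * (-1 : ℝ) ^ (∑ l, (t l : ℕ)) := by
    rw [hls, ← Finset.add_sum_erase _ _ (Finset.mem_univ (fun _ => (0 : Fin n)))]
    simp
    rw [hc0]; ring
  constructor
  · intro halt
    refine ⟨heig, fun lam hlam => ?_⟩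
    have hg := aux_gershgorin A hA lam hlam
    have hS : ∑ t ∈ Finset.univ.erase (fun _ => (0 : Fin n)), |A (Fin.cons (0 : Fin n) t)| =
        lamstar - c0 := by
      rw [hsplit]
      rw [add_sub_cancel_left]
      refine Finset.sum_congr rfl fun t ht => ?_
      have hne : t ≠ fun _ => 0 := (Finset.mem_erase.mp ht).1
      have h1 := halt t hne
      have : |A (Fin.cons (0 : Fin n) t)| =
          |A (Fin.cons (0 : Fin n) t) * (-1 : ℝ) ^ (∑ l, (t l : ℕ))| := by
        rw [abs_mul, abs_pow, abs_neg, abs_one, one_pow, mul_one]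
      rw [this, abs_of_nonneg h1]
    rw [hS] at hg
    have := (abs_le.mp hg).2
    linarith
  · intro halt
    refine ⟨heig, fun lam hlam => ?_⟩
    have hg := aux_gershgorin A hA lam hlam
    have hS : ∑ t ∈ Finset.univ.erase (fun _ => (0 : Fin n)), |A (Fin.cons (0 : Fin n) t)| =
        c0 - lamstar := by
      have : c0 - lamstar = ∑ t ∈ Finset.univ.erase (fun _ => (0 : Fin n)),
          -(A (Fin.cons 0 t) * (-1 : ℝ) ^ (∑ l, (t l : ℕ))) := by
        rw [hsplit]; rw [Finset.sum_neg_distrib]; ring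
      rw [this]
      refine Finset.sum_congr rfl fun t ht => ?_
      have hne : t ≠ fun _ => 0 := (Finset.mem_erase.mp ht).1
      have h1 := halt t hne
      have h2 : |A (Fin.cons (0 : Fin n) t)| =
          |A (Fin.cons (0 : Fin n) t) * (-1 : ℝ) ^ (∑ l, (t l : ℕ))| := by
        rw [abs_mul, abs_pow, abs_neg, abs_one, one_pow, mul_one]
      rw [h2, abs_of_nonpos h1]
    rw [hS] at hg
    have := (abs_le.mp hg).1
    linarith
end

section
/- The symmetrization of a Toeplitz tensor is a Toeplitz tensor, and the symmetrization of a circulant tensor is a circulant tensor. -/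
open BigOperators

/-- The symmetrization of a tensor: the average of its entries over all permutations of
the indices. -/
noncomputable def symT {m n : ℕ} (A : (Fin m → Fin n) → ℝ) : (Fin m → Fin n) → ℝ :=
  fun j => (∑ σ : Equiv.Perm (Fin m), A (j ∘ σ)) / (Nat.factorial m : ℝ)

/-- `A` is a Toeplitz tensor: entries are invariant under shifting all indices by one,
whenever no index wraps around. -/
def Toeplitz {m n : ℕ} [NeZero n] (A : (Fin m → Fin n) → ℝ) : Prop :=
  ∀ j : Fin m → Fin n, (∀ l, (j l : ℕ) + 1 < n) → A j = A (fun l => j l + 1)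

/-- The symmetrization of a Toeplitz tensor is a Toeplitz tensor, and the symmetrization
of a circulant tensor is a circulant tensor. -/
theorem stmt_11 (m n : ℕ) [NeZero n] (A : (Fin m → Fin n) → ℝ) :
    (Toeplitz A → Toeplitz (symT A)) ∧
    ((∀ j : Fin m → Fin n, A j = A (fun l => j l + 1)) →
      ∀ j : Fin m → Fin n, symT A j = symT A (fun l => j l + 1)) := by
  constructor
  · intro hA j hj
    unfold symT
    congr 1
    apply Finset.sum_congr rfl
    intro σ _
    have := hA (j ∘ σ) (fun l => hj (σ l))
    simpa [Function.comp_def] using this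
  · intro hA j
    unfold symT
    congr 1
    apply Finset.sum_congr rfl
    intro σ _
    have := hA (j ∘ σ)
    simpa [Function.comp_def] using this
end

section
/- The symmetrization of a circulant B₀ tensor is a circulant B₀ tensor, and the symmetrization of a circulant B tensor is a circulant B tensor. -/
open BigOperators

/-- `A` (order `m+1`) is a B₀ tensor: each row sum is nonnegative, and the average entry
of each row is at least any off-diagonal entry of that row. -/
def IsB0 {m n : ℕ} (A : (Fin (m + 1) → Fin n) → ℝ) : Prop :=
  ∀ j : Fin n,
    0 ≤ (∑ t : Fin m → Fin n, A (Fin.cons j t)) ∧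
    ∀ k : Fin m → Fin n, ¬(∀ l, k l = j) →
      A (Fin.cons j k) ≤ (∑ t : Fin m → Fin n, A (Fin.cons j t)) / (n : ℝ) ^ m

/-- `A` (order `m+1`) is a B tensor: strict versions of the B₀ inequalities. -/
def IsB {m n : ℕ} (A : (Fin (m + 1) → Fin n) → ℝ) : Prop :=
  ∀ j : Fin n,
    0 < (∑ t : Fin m → Fin n, A (Fin.cons j t)) ∧
    ∀ k : Fin m → Fin n, ¬(∀ l, k l = j) →
      A (Fin.cons j k) < (∑ t : Fin m → Fin n, A (Fin.cons j t)) / (n : ℝ) ^ m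

set_option linter.unusedSectionVars false

section Aux

variable {m n : ℕ} [NeZero n]

open Fin.NatCast Fin.CommRing in
lemma hA_shift (A : (Fin (m + 1) → Fin n) → ℝ)
    (hA : ∀ j : Fin (m + 1) → Fin n, A j = A (fun l => j l + 1)) :
    ∀ (d : Fin n) (j : Fin (m + 1) → Fin n), A j = A (fun l => j l + d) := by
  have H : ∀ (d : ℕ) (j : Fin (m + 1) → Fin n), A j = A (fun l => j l + (d : Fin n)) := by
    intro d
    induction d with
    | zero => intro j; simp
    | succ d ih =>
      intro j
      rw [ih j, hA (fun l => j l + (d : Fin n))]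
      congr 1
      funext l
      push_cast
      ring
  intro d j
  have := H d.val j
  simpa [Fin.cast_val_eq_self] using this

lemma cons_shift (d : Fin n) (j : Fin n) (t : Fin m → Fin n) :
    (Fin.cons (j + d) (fun l => t l + d) : Fin (m + 1) → Fin n)
      = fun i => (Fin.cons j t : Fin (m + 1) → Fin n) i + d := by
  funext i
  induction i using Fin.cases <;> simp

open Fin.NatCast Fin.CommRing in
/-- Key lemma: for a circulant tensor, the sum over all entries with one index
position fixed equals (total sum)/n. -/
lemma sum_fix (A : (Fin (m + 1) → Fin n) → ℝ)
    (hA : ∀ j : Fin (m + 1) → Fin n, A j = A (fun l => j l + 1))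
    (σ : Equiv.Perm (Fin (m + 1))) (j : Fin n) :
    ∑ t : Fin m → Fin n, A (Fin.cons j t ∘ σ)
      = (∑ f : Fin (m + 1) → Fin n, A f) / (n : ℝ) := by
  set g : Fin n → ℝ := fun j => ∑ t : Fin m → Fin n, A (Fin.cons j t ∘ σ) with hg
  have hconst : ∀ j' : Fin n, g j' = g j := by
    intro j'
    have hd : j' = j + (j' - j) := by ring
    set d := j' - j with hdd
    rw [hd]
    show (∑ t : Fin m → Fin n, A (Fin.cons (j + d) t ∘ σ)) = g j
    rw [← Equiv.sum_comp (Equiv.piCongrRight (fun _ : Fin m => Equiv.addRight d))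
      (fun t => A (Fin.cons (j + d) t ∘ σ))]
    apply Finset.sum_congr rfl
    intro t _
    have h1 : (Equiv.piCongrRight (fun _ : Fin m => Equiv.addRight d)) t
        = fun l => t l + d := rfl
    rw [h1, cons_shift d j t]
    have : (fun i => (Fin.cons j t : Fin (m + 1) → Fin n) i + d) ∘ σ
        = fun l => ((Fin.cons j t : Fin (m + 1) → Fin n) ∘ σ) l + d := rfl
    rw [this, ← hA_shift A hA d (Fin.cons j t ∘ σ)]
  have htot : ∑ j' : Fin n, g j' = ∑ f : Fin (m + 1) → Fin n, A f := by
    have h1 : ∑ j' : Fin n, g j'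
        = ∑ p : Fin n × (Fin m → Fin n), A (Fin.cons p.1 p.2 ∘ σ) := by
      rw [Fintype.sum_prod_type]
    rw [h1]
    have h2 : ∑ p : Fin n × (Fin m → Fin n), A (Fin.cons p.1 p.2 ∘ σ)
        = ∑ f : Fin (m + 1) → Fin n, A (f ∘ σ) := by
      apply Fintype.sum_equiv (Fin.consEquiv (fun _ => Fin n))
      intro p
      rfl
    rw [h2]
    exact Fintype.sum_bijective (fun f => f ∘ σ)
      ((Equiv.arrowCongr σ.symm (Equiv.refl (Fin n))).bijective) _ _ (fun f => rfl)
  have hsum : (n : ℝ) * g j = ∑ f : Fin (m + 1) → Fin n, A f := by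
    rw [← htot, Finset.sum_congr rfl (fun j' _ => hconst j')]
    simp [mul_comm]
  have hn : (n : ℝ) ≠ 0 := Nat.cast_ne_zero.mpr (NeZero.ne n)
  rw [show (∑ t : Fin m → Fin n, A (Fin.cons j t ∘ σ)) = g j from rfl,
    eq_div_iff hn, mul_comm]
  exact hsum

lemma factpos : (0:ℝ) < (Nat.factorial (m+1) : ℝ) := by
  exact_mod_cast Nat.factorial_pos (m+1)

lemma card_perm_fin : (Fintype.card (Equiv.Perm (Fin (m+1))) : ℝ)
    = (Nat.factorial (m+1) : ℝ) := by
  rw [Fintype.card_perm, Fintype.card_fin]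

/-- row sum of A. -/
lemma rowsumA (A : (Fin (m + 1) → Fin n) → ℝ)
    (hA : ∀ j : Fin (m + 1) → Fin n, A j = A (fun l => j l + 1)) (j : Fin n) :
    ∑ t : Fin m → Fin n, A (Fin.cons j t)
      = (∑ f : Fin (m + 1) → Fin n, A f) / (n : ℝ) := by
  have := sum_fix A hA 1 j
  simpa using this

lemma rowsum_symT (A : (Fin (m + 1) → Fin n) → ℝ)
    (hA : ∀ j : Fin (m + 1) → Fin n, A j = A (fun l => j l + 1)) (j : Fin n) :
    ∑ t : Fin m → Fin n, symT A (Fin.cons j t)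
      = (∑ f : Fin (m + 1) → Fin n, A f) / (n : ℝ) := by
  unfold symT
  rw [← Finset.sum_div, Finset.sum_comm]
  rw [Finset.sum_congr rfl (fun σ _ => sum_fix A hA σ j)]
  rw [Finset.sum_const, Finset.card_univ, nsmul_eq_mul, card_perm_fin]
  have hn : (n : ℝ) ≠ 0 := Nat.cast_ne_zero.mpr (NeZero.ne n)
  have hc : (Nat.factorial (m+1) : ℝ) ≠ 0 := (factpos (m := m)).ne'
  field_simp

/-- symmetrization is circulant -/
lemma symT_circ (A : (Fin (m + 1) → Fin n) → ℝ)
    (hA : ∀ j : Fin (m + 1) → Fin n, A j = A (fun l => j l + 1))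
    (j : Fin (m + 1) → Fin n) : symT A j = symT A (fun l => j l + 1) := by
  unfold symT
  congr 1
  apply Finset.sum_congr rfl
  intro σ _
  exact hA (j ∘ σ)

lemma offdiag_le (A : (Fin (m + 1) → Fin n) → ℝ)
    (hA : ∀ j : Fin (m + 1) → Fin n, A j = A (fun l => j l + 1))
    (hB : IsB0 A) (j : Fin n) (k : Fin m → Fin n) (hk : ¬(∀ l, k l = j))
    (σ : Equiv.Perm (Fin (m + 1))) :
    A (Fin.cons j k ∘ σ)
      ≤ ((∑ f : Fin (m + 1) → Fin n, A f) / (n : ℝ)) / (n : ℝ) ^ m := by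
  set f : Fin (m + 1) → Fin n := Fin.cons j k ∘ σ with hf
  obtain ⟨l, hl⟩ := not_forall.mp hk
  have hne : f (σ.symm l.succ) ≠ f (σ.symm 0) := by
    simp only [hf, Function.comp_apply, Equiv.apply_symm_apply, Fin.cons_succ,
      Fin.cons_zero]
    exact hl
  have h0 : f = Fin.cons (f 0) (fun i => f i.succ) := (Fin.cons_self_tail f).symm
  have hk' : ¬ ∀ i : Fin m, f i.succ = f 0 := by
    intro h
    have hc : ∀ i, f i = f 0 := fun i => Fin.cases rfl h i
    exact hne ((hc _).trans (hc _).symm)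
  have h2 := (hB (f 0)).2 (fun i => f i.succ) hk'
  rw [rowsumA A hA] at h2
  calc A f = A (Fin.cons (f 0) (fun i => f i.succ)) := by rw [← h0]
    _ ≤ _ := h2

lemma offdiag_lt (A : (Fin (m + 1) → Fin n) → ℝ)
    (hA : ∀ j : Fin (m + 1) → Fin n, A j = A (fun l => j l + 1))
    (hB : IsB A) (j : Fin n) (k : Fin m → Fin n) (hk : ¬(∀ l, k l = j))
    (σ : Equiv.Perm (Fin (m + 1))) :
    A (Fin.cons j k ∘ σ)
      < ((∑ f : Fin (m + 1) → Fin n, A f) / (n : ℝ)) / (n : ℝ) ^ m := by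
  set f : Fin (m + 1) → Fin n := Fin.cons j k ∘ σ with hf
  obtain ⟨l, hl⟩ := not_forall.mp hk
  have hne : f (σ.symm l.succ) ≠ f (σ.symm 0) := by
    simp only [hf, Function.comp_apply, Equiv.apply_symm_apply, Fin.cons_succ,
      Fin.cons_zero]
    exact hl
  have h0 : f = Fin.cons (f 0) (fun i => f i.succ) := (Fin.cons_self_tail f).symm
  have hk' : ¬ ∀ i : Fin m, f i.succ = f 0 := by
    intro h
    have hc : ∀ i, f i = f 0 := fun i => Fin.cases rfl h i
    exact hne ((hc _).trans (hc _).symm)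
  have h2 := (hB (f 0)).2 (fun i => f i.succ) hk'
  rw [rowsumA A hA] at h2
  calc A f = A (Fin.cons (f 0) (fun i => f i.succ)) := by rw [← h0]
    _ < _ := h2

lemma symT_le {A : (Fin (m + 1) → Fin n) → ℝ} {x : Fin (m + 1) → Fin n} {b : ℝ}
    (h : ∀ σ : Equiv.Perm (Fin (m + 1)), A (x ∘ σ) ≤ b) : symT A x ≤ b := by
  unfold symT
  rw [div_le_iff₀ factpos]
  calc ∑ σ : Equiv.Perm (Fin (m + 1)), A (x ∘ σ)
      ≤ ∑ _σ : Equiv.Perm (Fin (m + 1)), b := Finset.sum_le_sum (fun σ _ => h σ)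
    _ = b * (Nat.factorial (m+1) : ℝ) := by
        rw [Finset.sum_const, Finset.card_univ, nsmul_eq_mul, card_perm_fin]; ring

lemma symT_lt {A : (Fin (m + 1) → Fin n) → ℝ} {x : Fin (m + 1) → Fin n} {b : ℝ}
    (h : ∀ σ : Equiv.Perm (Fin (m + 1)), A (x ∘ σ) < b) : symT A x < b := by
  unfold symT
  rw [div_lt_iff₀ factpos]
  calc ∑ σ : Equiv.Perm (Fin (m + 1)), A (x ∘ σ)
      < ∑ _σ : Equiv.Perm (Fin (m + 1)), b :=
        Finset.sum_lt_sum_of_nonempty Finset.univ_nonempty (fun σ _ => h σ)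
    _ = b * (Nat.factorial (m+1) : ℝ) := by
        rw [Finset.sum_const, Finset.card_univ, nsmul_eq_mul, card_perm_fin]; ring

end Aux

/-- The symmetrization of a circulant B₀ tensor is a circulant B₀ tensor, and the
symmetrization of a circulant B tensor is a circulant B tensor. -/
theorem stmt_12 (m n : ℕ) [NeZero n] (A : (Fin (m + 1) → Fin n) → ℝ)
    (hA : ∀ j : Fin (m + 1) → Fin n, A j = A (fun l => j l + 1)) :
    (IsB0 A → (∀ j : Fin (m + 1) → Fin n, symT A j = symT A (fun l => j l + 1)) ∧
      IsB0 (symT A)) ∧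
    (IsB A → (∀ j : Fin (m + 1) → Fin n, symT A j = symT A (fun l => j l + 1)) ∧
      IsB (symT A)) := by
  constructor
  · intro hB
    refine ⟨symT_circ A hA, fun j => ?_⟩
    have h1 := (hB j).1
    rw [rowsumA A hA] at h1
    rw [rowsum_symT A hA j]
    refine ⟨h1, fun k hk => ?_⟩
    exact symT_le (fun σ => offdiag_le A hA hB j k hk σ)
  · intro hB
    refine ⟨symT_circ A hA, fun j => ?_⟩
    have h1 := (hB j).1
    rw [rowsumA A hA] at h1
    rw [rowsum_symT A hA j]
    refine ⟨h1, fun k hk => ?_⟩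
    exact symT_lt (fun σ => offdiag_lt A hA hB j k hk σ)
end

section
/- An even order circulant B₀ tensor is positive semi-definite, and an even order circulant B tensor is positive definite. -/
open BigOperators

section AuxCirculant

open Finset

-- iterated circulant shift
open Fin.NatCast in
theorem circ_shift {m n : ℕ} [NeZero n] (A : (Fin (m + 1) → Fin n) → ℝ)
    (hA : ∀ j : Fin (m + 1) → Fin n, A j = A (fun l => j l + 1)) :
    ∀ (c : Fin n) (j : Fin (m + 1) → Fin n), A (fun l => j l + c) = A j := by
  have key : ∀ (k : ℕ) (j : Fin (m + 1) → Fin n), A (fun l => j l + (k : Fin n)) = A j := by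
    intro k
    induction k with
    | zero => intro j; simp
    | succ k ih =>
      intro j
      have h1 : ((k + 1 : ℕ) : Fin n) = (k : Fin n) + 1 := by push_cast; ring
      have h2 : (fun l => j l + ((k + 1 : ℕ) : Fin n)) = (fun l => (j l + (k : Fin n)) + 1) := by
        funext l; rw [h1, add_assoc]
      rw [h2, ← hA (fun l => j l + (k : Fin n)), ih]
  intro c j
  have : c = ((c.val : ℕ) : Fin n) := (Fin.cast_val_eq_self c).symm
  rw [this]
  exact key c.val j

theorem cons_add {m n : ℕ} [NeZero n] (j : Fin n) (t : Fin m → Fin n) (c : Fin n) :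
    (fun l => (Fin.cons j t : Fin (m+1) → Fin n) l + c)
      = (Fin.cons (j + c) (fun l' => t l' + c) : Fin (m+1) → Fin n) := by
  funext l
  refine Fin.cases ?_ ?_ l <;> simp
theorem amgm_even {N : ℕ} (hN : Even N) (hN0 : N ≠ 0) (y : Fin N → ℝ) :
    ∏ l, y l ≤ (∑ l, y l ^ N) / N := by
  have h1 : ∏ l, y l ≤ ∏ l, |y l| := by
    calc ∏ l, y l ≤ |∏ l, y l| := le_abs_self _
    _ = ∏ l, |y l| := Finset.abs_prod _ _
  have h2 : ∏ l, |y l| ≤ ∑ l : Fin N, (1 / N : ℝ) * |y l| ^ N := by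
    have := Real.geom_mean_le_arith_mean_weighted Finset.univ
      (fun _ : Fin N => (1 / N : ℝ)) (fun l => |y l| ^ N)
      (fun i _ => by positivity)
      (by simp [Finset.card_univ]; field_simp)
      (fun i _ => by positivity)
    calc ∏ l, |y l| = ∏ l, (|y l| ^ N) ^ (1 / N : ℝ) := by
          refine Finset.prod_congr rfl fun l _ => ?_
          rw [← Real.rpow_natCast (|y l|) N, ← Real.rpow_mul (abs_nonneg _),
            mul_one_div, div_self (by exact_mod_cast hN0), Real.rpow_one]
    _ ≤ _ := this
  have h3 : ∀ l, |y l| ^ N = y l ^ N := fun l => hN.pow_abs _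
  calc ∏ l, y l ≤ ∑ l : Fin N, (1 / N : ℝ) * |y l| ^ N := h1.trans h2
  _ = (∑ l, y l ^ N) / N := by
      simp only [h3]
      rw [← Finset.mul_sum, one_div, inv_mul_eq_div]
theorem rowsum_const {m n : ℕ} [NeZero n] (A : (Fin (m + 1) → Fin n) → ℝ)
    (hA : ∀ j : Fin (m + 1) → Fin n, A j = A (fun l => j l + 1)) (j0 : Fin n) :
    ∑ t : Fin m → Fin n, A (Fin.cons j0 t) = ∑ t : Fin m → Fin n, A (Fin.cons 0 t) := by
  refine Fintype.sum_bijective (fun t l' => t l' + (-j0))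
    ((Equiv.piCongrRight (fun _ : Fin m => Equiv.addRight (-j0))).bijective) _ _ (fun t => ?_)
  show A (Fin.cons j0 t) = A (Fin.cons 0 (fun l' => t l' + (-j0)))
  rw [← circ_shift A hA (-j0) (Fin.cons j0 t), cons_add, add_neg_cancel]

theorem b0_psd {m n : ℕ} [NeZero n] (hm : Even (m + 1))
    (A : (Fin (m + 1) → Fin n) → ℝ)
    (hA : ∀ j : Fin (m + 1) → Fin n, A j = A (fun l => j l + 1))
    (hB : IsB0 A) (x : Fin n → ℝ) :
    0 ≤ ∑ j : Fin (m + 1) → Fin n, A j * ∏ l, x (j l) := by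
  have hn : (0 : ℝ) < n := by exact_mod_cast Nat.pos_of_ne_zero (NeZero.ne n)
  have hnm : (0 : ℝ) < (n : ℝ) ^ m := pow_pos hn m
  set r : ℝ := ∑ t : Fin m → Fin n, A (Fin.cons 0 t) with hr
  set M : ℝ := r / (n : ℝ) ^ m with hM
  have hr0 : 0 ≤ r := (hB 0).1
  have hM0 : 0 ≤ M := div_nonneg hr0 hnm.le
  -- off-diagonal entries are at most M
  have hoff : ∀ j : Fin (m + 1) → Fin n, ¬(∀ l, j l = j 0) → A j ≤ M := by
    intro j hj
    have htail : ¬(∀ l : Fin m, Fin.tail j l = j 0) := by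
      intro h
      exact hj (fun l => by
        refine Fin.cases ?_ ?_ l
        · rfl
        · intro i; exact h i)
    have := (hB (j 0)).2 (Fin.tail j) htail
    rwa [Fin.cons_self_tail, rowsum_const A hA] at this
  -- total sum of A equals n * r
  have htot : ∑ j : Fin (m + 1) → Fin n, A j = n * r := by
    have he : ∑ j : Fin (m + 1) → Fin n, A j
        = ∑ p : Fin n × (Fin m → Fin n), A (Fin.cons p.1 p.2) :=
      (Fintype.sum_equiv (Fin.consEquiv (fun _ : Fin (m+1) => Fin n)) _ _ (fun p => rfl)).symm
    rw [he, Fintype.sum_prod_type]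
    simp only [rowsum_const A hA]
    simp [mul_comm, hr]
  -- v l i = 0
  have hv : ∀ (l : Fin (m + 1)) (i : Fin n),
      ∑ j : Fin (m + 1) → Fin n, (if j l = i then A j - M else 0) = 0 := by
    intro l
    have hshift : ∀ i : Fin n,
        ∑ j : Fin (m + 1) → Fin n, (if j l = i then A j - M else 0)
        = ∑ j : Fin (m + 1) → Fin n, (if j l = 0 then A j - M else 0) := by
      intro i
      refine (Fintype.sum_bijective (fun j l' => j l' + i)
        ((Equiv.piCongrRight (fun _ : Fin (m+1) => Equiv.addRight i)).bijective)
        _ _ (fun j => ?_)).symm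
      show (if j l = 0 then A j - M else 0)
          = (if j l + i = i then A (fun l' => j l' + i) - M else 0)
      rw [circ_shift A hA i j]
      congr 1
      simp [add_eq_right]
    have hsum : ∑ i : Fin n, ∑ j : Fin (m + 1) → Fin n, (if j l = i then A j - M else 0)
        = ∑ j : Fin (m + 1) → Fin n, (A j - M) := by
      rw [Finset.sum_comm]
      refine Finset.sum_congr rfl fun j _ => ?_
      exact Finset.sum_ite_eq Finset.univ (j l) (fun _ => A j - M) |>.trans (by simp)
    have hzero : ∑ j : Fin (m + 1) → Fin n, (A j - M) = 0 := by
      rw [Finset.sum_sub_distrib, htot, Finset.sum_const, Finset.card_univ]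
      have hcard : Fintype.card (Fin (m + 1) → Fin n) = n ^ (m + 1) := by
        simp [Fintype.card_fun]
      rw [hcard, nsmul_eq_mul, hM]
      push_cast
      field_simp
      ring
    intro i
    rw [hshift i]
    have : (n : ℝ) * (∑ j : Fin (m + 1) → Fin n, (if j l = 0 then A j - M else 0)) = 0 := by
      calc (n : ℝ) * _ = ∑ _i : Fin n, (∑ j : Fin (m + 1) → Fin n, (if j l = 0 then A j - M else 0)) := by
            rw [Finset.sum_const, Finset.card_univ, Fintype.card_fin, nsmul_eq_mul]
      _ = ∑ i : Fin n, ∑ j : Fin (m + 1) → Fin n, (if j l = i then A j - M else 0) := by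
            refine Finset.sum_congr rfl fun i _ => (hshift i).symm
      _ = 0 := hsum.trans hzero
    exact (mul_eq_zero.1 this).resolve_left hn.ne'
  -- termwise inequality
  have key : ∀ j : Fin (m + 1) → Fin n,
      (A j - M) * ((∑ l, x (j l) ^ (m + 1)) / (m + 1)) ≤ (A j - M) * ∏ l, x (j l) := by
    intro j
    by_cases hj : ∀ l, j l = j 0
    · have h1 : ∏ l, x (j l) = x (j 0) ^ (m + 1) := by
        rw [Finset.prod_congr rfl (fun l _ => by rw [hj l])]
        simp
      have h2 : (∑ l, x (j l) ^ (m + 1)) / ((m : ℝ) + 1) = x (j 0) ^ (m + 1) := by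
        rw [Finset.sum_congr rfl (fun l _ => by rw [hj l])]
        rw [Finset.sum_const, Finset.card_univ, Fintype.card_fin, nsmul_eq_mul]
        field_simp
        push_cast; ring
      rw [h1, h2]
    · have h1 : A j - M ≤ 0 := sub_nonpos.2 (hoff j hj)
      have h2 := amgm_even hm (Nat.succ_ne_zero m) (fun l => x (j l))
      push_cast at h2
      exact mul_le_mul_of_nonpos_left h2 h1
  -- the avg-sum is zero
  have hsum0 : ∑ j : Fin (m + 1) → Fin n,
      (A j - M) * ((∑ l, x (j l) ^ (m + 1)) / (m + 1)) = 0 := by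
    have step1 : ∀ j : Fin (m + 1) → Fin n,
        (A j - M) * ((∑ l, x (j l) ^ (m + 1)) / (m + 1))
        = ∑ l, (A j - M) * x (j l) ^ (m + 1) / (m + 1) := by
      intro j
      rw [mul_div_assoc']
      rw [Finset.mul_sum]
      rw [Finset.sum_div]
    simp only [step1]
    rw [Finset.sum_comm]
    refine Finset.sum_eq_zero fun l _ => ?_
    have : ∀ j : Fin (m + 1) → Fin n, (A j - M) * x (j l) ^ (m + 1) / (m + 1)
        = ∑ i : Fin n, (if j l = i then (A j - M) * x i ^ (m + 1) / (m + 1) else 0) := by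
      intro j
      rw [Finset.sum_ite_eq Finset.univ (j l)]
      simp
    simp only [this]
    rw [Finset.sum_comm]
    refine Finset.sum_eq_zero fun i _ => ?_
    have : ∀ j : Fin (m + 1) → Fin n,
        (if j l = i then (A j - M) * x i ^ (m + 1) / (m + 1) else 0)
        = (if j l = i then (A j - M) else 0) * (x i ^ (m + 1) / (m + 1)) := by
      intro j
      split <;> simp [mul_div_assoc]
    simp only [this]
    rw [← Finset.sum_mul, hv l i, zero_mul]
  -- putting it together
  have hsplit : ∑ j : Fin (m + 1) → Fin n, A j * ∏ l, x (j l)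
      = (∑ j : Fin (m + 1) → Fin n, (A j - M) * ∏ l, x (j l)) + M * (∑ i, x i) ^ (m + 1) := by
    have hpow : (∑ i, x i) ^ (m + 1) = ∑ j : Fin (m + 1) → Fin n, ∏ l, x (j l) := by
      rw [← Fintype.prod_sum (fun (_ : Fin (m+1)) (i : Fin n) => x i)]
      simp
    rw [hpow, Finset.mul_sum, ← Finset.sum_add_distrib]
    refine Finset.sum_congr rfl fun j _ => by ring
  rw [hsplit]
  have h1 : 0 ≤ ∑ j : Fin (m + 1) → Fin n, (A j - M) * ∏ l, x (j l) := by
    rw [← hsum0]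
    exact Finset.sum_le_sum fun j _ => key j
  have h2 : 0 ≤ M * (∑ i, x i) ^ (m + 1) := mul_nonneg hM0 (hm.pow_nonneg _)
  linarith
-- sum over diagonal tuples
theorem diag_sum {m n : ℕ} [NeZero n] (g : (Fin (m + 1) → Fin n) → ℝ) :
    ∑ j : Fin (m + 1) → Fin n, (if ∀ l, j l = j 0 then g j else 0)
      = ∑ i : Fin n, g (fun _ => i) := by
  have : ∀ j : Fin (m + 1) → Fin n,
      (if ∀ l, j l = j 0 then g j else 0)
        = ∑ i : Fin n, (if j = (fun _ => i) then g j else 0) := by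
    intro j
    by_cases hj : ∀ l, j l = j 0
    · have hc : ∀ i : Fin n, (j = fun _ => i) ↔ j 0 = i := by
        intro i
        constructor
        · intro h; rw [h]
        · intro h; funext l; rw [hj l, h]
      simp only [hc]
      rw [if_pos hj]
      rw [Finset.sum_ite_eq Finset.univ (j 0) (fun _ => g j)]
      simp
    · rw [if_neg hj]
      refine (Finset.sum_eq_zero fun i _ => ?_).symm
      rw [if_neg]
      intro h
      exact hj (fun l => by rw [h])
  simp only [this]
  rw [Finset.sum_comm]
  refine Finset.sum_congr rfl fun i _ => ?_
  rw [Finset.sum_ite_eq' Finset.univ (fun _ => i) g]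
  simp
theorem b_pd {m n : ℕ} [NeZero n] (hm : Even (m + 1))
    (A : (Fin (m + 1) → Fin n) → ℝ)
    (hA : ∀ j : Fin (m + 1) → Fin n, A j = A (fun l => j l + 1))
    (hB : IsB A) (x : Fin n → ℝ) (hx : x ≠ 0) :
    0 < ∑ j : Fin (m + 1) → Fin n, A j * ∏ l, x (j l) := by
  classical
  have hn : (0 : ℝ) < n := by exact_mod_cast Nat.pos_of_ne_zero (NeZero.ne n)
  have hnm : (0 : ℝ) < (n : ℝ) ^ m := pow_pos hn m
  set r : ℝ := ∑ t : Fin m → Fin n, A (Fin.cons 0 t) with hr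
  set M : ℝ := r / (n : ℝ) ^ m with hM
  have hr0 : 0 < r := (hB 0).1
  -- the finite set of off-diagonal row positions
  set S : Finset (Fin n × (Fin m → Fin n)) :=
    Finset.univ.filter (fun p => ¬∀ l, p.2 l = p.1) with hS
  set f : Fin n × (Fin m → Fin n) → ℝ :=
    fun p => (n : ℝ) ^ m * (M - A (Fin.cons p.1 p.2)) with hf
  set T : Finset ℝ := insert r (S.image f) with hT
  have hTne : T.Nonempty := ⟨r, Finset.mem_insert_self _ _⟩
  set ε : ℝ := T.min' hTne with hε
  have hfpos : ∀ p ∈ S, 0 < f p := by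
    intro p hp
    rw [hS, Finset.mem_filter] at hp
    have h1 := (hB p.1).2 p.2 hp.2
    rw [rowsum_const A hA] at h1
    have : A (Fin.cons p.1 p.2) < M := h1
    rw [hf]
    have := sub_pos.2 this
    positivity
  have hε0 : 0 < ε := by
    rw [hε, Finset.lt_min'_iff]
    intro y hy
    rw [hT, Finset.mem_insert] at hy
    rcases hy with hy | hy
    · rw [hy]; exact hr0
    · obtain ⟨p, hp, rfl⟩ := Finset.mem_image.1 hy
      exact hfpos p hp
  have hεr : ε ≤ r := Finset.min'_le _ _ (Finset.mem_insert_self _ _)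
  have hεf : ∀ p ∈ S, ε ≤ f p := fun p hp =>
    Finset.min'_le _ _ (Finset.mem_insert_of_mem (Finset.mem_image_of_mem f hp))
  -- the perturbed tensor
  set D : (Fin (m + 1) → Fin n) → ℝ :=
    fun j => if ∀ l, j l = j 0 then (1 : ℝ) else 0 with hD
  set A' : (Fin (m + 1) → Fin n) → ℝ := fun j => A j - ε * D j with hA'def
  have hDcirc : ∀ j : Fin (m + 1) → Fin n, D j = D (fun l => j l + 1) := by
    intro j
    rw [hD]
    refine (if_congr ?_ rfl rfl).symm
    constructor
    · intro h l; exact add_right_cancel (h l)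
    · intro h l; simp only; rw [h l]
  have hA' : ∀ j : Fin (m + 1) → Fin n, A' j = A' (fun l => j l + 1) := by
    intro j
    rw [hA'def]
    simp only
    rw [← hA j, ← hDcirc j]
  -- D's row sums
  have hDrow : ∀ j0 : Fin n, ∑ t : Fin m → Fin n, D (Fin.cons j0 t) = 1 := by
    intro j0
    have : ∀ t : Fin m → Fin n, D (Fin.cons j0 t) = if t = (fun _ => j0) then (1:ℝ) else 0 := by
      intro t
      rw [hD]
      simp only
      congr 1
      simp only [eq_iff_iff]
      rw [Fin.forall_fin_succ]
      simp [Fin.cons_zero, Fin.cons_succ, funext_iff]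
    simp only [this]
    rw [Finset.sum_ite_eq' Finset.univ (fun _ => j0) (fun _ => (1:ℝ))]
    simp
  have hB0' : IsB0 A' := by
    intro j0
    have hrow' : ∑ t : Fin m → Fin n, A' (Fin.cons j0 t) = r - ε := by
      rw [hA'def]
      simp only
      rw [Finset.sum_sub_distrib, ← Finset.mul_sum, hDrow j0, mul_one, rowsum_const A hA]
    constructor
    · rw [hrow']; linarith
    · intro k hk
      rw [hrow']
      have hdiagk : ¬(∀ l : Fin (m+1), (Fin.cons j0 k : Fin (m+1) → Fin n) l
          = (Fin.cons j0 k : Fin (m+1) → Fin n) 0) := by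
        rw [Fin.forall_fin_succ]
        simp only [Fin.cons_zero, Fin.cons_succ]
        intro h
        exact hk h.2
      have hAk : A' (Fin.cons j0 k) = A (Fin.cons j0 k) := by
        simp only [hA'def, hD, if_neg hdiagk, mul_zero, sub_zero]
      rw [hAk]
      have h1 : ε ≤ (n : ℝ) ^ m * (M - A (Fin.cons j0 k)) := by
        refine hεf (j0, k) ?_
        rw [hS, Finset.mem_filter]
        exact ⟨Finset.mem_univ _, hk⟩
      rw [le_div_iff₀ hnm]
      have hMr : M * (n : ℝ) ^ m = r := by rw [hM]; field_simp
      nlinarith [h1, hMr]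
  -- conclude
  have hpsd := b0_psd hm A' hA' hB0' x
  have hsplit : ∑ j : Fin (m + 1) → Fin n, A' j * ∏ l, x (j l)
      = (∑ j : Fin (m + 1) → Fin n, A j * ∏ l, x (j l)) - ε * ∑ i, x i ^ (m + 1) := by
    rw [hA'def]
    simp only [sub_mul]
    rw [Finset.sum_sub_distrib]
    congr 1
    calc ∑ j : Fin (m + 1) → Fin n, ε * D j * ∏ l, x (j l)
        = ε * ∑ j : Fin (m + 1) → Fin n, (if ∀ l, j l = j 0 then ∏ l, x (j l) else 0) := by
          rw [Finset.mul_sum]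
          refine Finset.sum_congr rfl fun j _ => ?_
          rw [hD]; simp only; split <;> ring
      _ = ε * ∑ i, ∏ _l : Fin (m + 1), x i := by
          rw [diag_sum (fun j => ∏ l, x (j l))]
      _ = ε * ∑ i, x i ^ (m + 1) := by simp
  have hxsum : 0 < ∑ i, x i ^ (m + 1) := by
    obtain ⟨i, hi⟩ := Function.ne_iff.1 hx
    refine Finset.sum_pos' (fun i _ => hm.pow_nonneg _) ⟨i, Finset.mem_univ i, ?_⟩
    exact hm.pow_pos hi
  rw [hsplit] at hpsd
  nlinarith

end AuxCirculant

/-- An even order circulant B₀ tensor is positive semi-definite; an even order circulant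
B tensor is positive definite. -/
theorem stmt_14 (m n : ℕ) [NeZero n] (hm : Even (m + 1))
    (A : (Fin (m + 1) → Fin n) → ℝ)
    (hA : ∀ j : Fin (m + 1) → Fin n, A j = A (fun l => j l + 1)) :
    (IsB0 A → ∀ x : Fin n → ℝ,
      0 ≤ ∑ j : Fin (m + 1) → Fin n, A j * ∏ l, x (j l)) ∧
    (IsB A → ∀ x : Fin n → ℝ, x ≠ 0 →
      0 < ∑ j : Fin (m + 1) → Fin n, A j * ∏ l, x (j l)) :=
  ⟨fun h x => b0_psd hm A hA h x, fun h x hx => b_pd hm A hA h x hx⟩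
end

section
/- Let m be even and A ∈ C_{m,n} a circulant tensor whose associated tensor is non-positive. Then A is positive semi-definite if and only if λ_0(A) ≥ 0, i.e., the sum of all entries of the root tensor is nonnegative. -/
open BigOperators

/-- AM-GM for a product of `d` absolute values. -/
lemma amgm_abs_prod (d : ℕ) (hd : 0 < d) (y : Fin d → ℝ) :
    ∏ l, |y l| ≤ ∑ l, (1 / (d : ℝ)) * |y l| ^ d := by
  have hdr : (d : ℝ) ≠ 0 := Nat.cast_ne_zero.mpr hd.ne'
  have h := Real.geom_mean_le_arith_mean_weighted Finset.univ
      (fun _ : Fin d => (1 / (d : ℝ))) (fun l => |y l| ^ d)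
      (fun i _ => by positivity)
      (by simp [Finset.sum_const, mul_comm, hdr])
      (fun i _ => by positivity)
  calc ∏ l, |y l| = ∏ l : Fin d, (|y l| ^ d) ^ (1 / (d : ℝ)) := by
        refine Finset.prod_congr rfl fun l _ => ?_
        rw [← Real.rpow_natCast (|y l|) d, ← Real.rpow_mul (abs_nonneg _),
          mul_one_div_cancel hdr, Real.rpow_one]
    _ ≤ ∑ l : Fin d, (1 / (d : ℝ)) * |y l| ^ d := h

/-- The reindexing equivalence for circulant tensors. -/
def circEquiv (m n : ℕ) [NeZero n] : (Fin m → Fin n) × Fin n ≃ (Fin (m + 1) → Fin n) where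
  toFun p := fun l => (Fin.cons 0 p.1 : Fin (m + 1) → Fin n) l + p.2
  invFun j := (fun l => j l.succ - j 0, j 0)
  left_inv := by
    rintro ⟨t, i⟩
    refine Prod.ext ?_ ?_
    · funext l; simp
    · simp
  right_inv := by
    intro j
    funext l
    refine Fin.cases ?_ ?_ l
    · simp
    · intro l'; simp

/-- Let the order `m+1` be even and `A ∈ C_{m+1,n}` a circulant tensor whose associated
tensor is non-positive. Then `A` is positive semi-definite iff `λ₀(A) ≥ 0`, i.e. the sum
of all entries of the root tensor is nonnegative. -/
theorem stmt_15 (m n : ℕ) [NeZero n] (hm : Even (m + 1))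
    (A : (Fin (m + 1) → Fin n) → ℝ)
    (hA : ∀ j : Fin (m + 1) → Fin n, A j = A (fun l => j l + 1))
    (hassoc : ∀ t : Fin m → Fin n, t ≠ (fun _ => 0) → A (Fin.cons 0 t) ≤ 0) :
    (∀ x : Fin n → ℝ, 0 ≤ ∑ j : Fin (m + 1) → Fin n, A j * ∏ l, x (j l)) ↔
      0 ≤ ∑ t : Fin m → Fin n, A (Fin.cons 0 t) := by
  -- shift invariance by any constant
  open Fin.NatCast in
  have hshiftN : ∀ (k : ℕ) (j : Fin (m + 1) → Fin n),
      A (fun l => j l + (k : Fin n)) = A j := by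
    intro k
    induction k with
    | zero => intro j; simp
    | succ k ih =>
      intro j
      have h1 : (fun l => j l + ((k + 1 : ℕ) : Fin n))
          = fun l => (j l + 1) + (k : Fin n) := by
        funext l; push_cast; ac_rfl
      rw [h1, ih (fun l => j l + 1), ← hA]
  open Fin.NatCast in
  have hshift : ∀ (c : Fin n) (j : Fin (m + 1) → Fin n),
      A (fun l => j l + c) = A j := by
    intro c j
    have := hshiftN c.val j
    rwa [Fin.cast_val_eq_self] at this
  -- reindexing equiv
  let e := circEquiv m n
  have key : ∀ x : Fin n → ℝ,
      ∑ j : Fin (m + 1) → Fin n, A j * ∏ l, x (j l)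
        = ∑ t : Fin m → Fin n, A (Fin.cons 0 t)
            * ∑ i : Fin n, ∏ l, x ((Fin.cons 0 t : Fin (m + 1) → Fin n) l + i) := by
    intro x
    rw [← Equiv.sum_comp e (fun j => A j * ∏ l, x (j l)), Fintype.sum_prod_type]
    refine Finset.sum_congr rfl fun t _ => ?_
    rw [Finset.mul_sum]
    refine Finset.sum_congr rfl fun i _ => ?_
    simp only [e, circEquiv, Equiv.coe_fn_mk]
    rw [hshift i (Fin.cons 0 t)]
  constructor
  · -- PSD → λ₀ ≥ 0
    intro hpsd
    have h1 := hpsd (fun _ => 1)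
    have h2 := key (fun _ => 1)
    simp only [Finset.prod_const, one_pow, mul_one, Finset.sum_const,
      Finset.card_univ, Fintype.card_fin, nsmul_eq_mul] at h1 h2
    rw [h2, ← Finset.sum_mul] at h1
    have hn : (0 : ℝ) < n := by
      exact_mod_cast Nat.pos_of_ne_zero (NeZero.ne n)
    nlinarith [h1]
  · -- λ₀ ≥ 0 → PSD
    intro hlam x
    rw [key]
    set S : ℝ := ∑ k : Fin n, x k ^ (m + 1) with hS
    have hS0 : 0 ≤ S := Finset.sum_nonneg fun k _ => hm.pow_nonneg _
    set P : (Fin m → Fin n) → ℝ :=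
      fun t => ∑ i : Fin n, ∏ l, x ((Fin.cons 0 t : Fin (m + 1) → Fin n) l + i) with hP
    -- each P t is at most S
    have hPle : ∀ t, P t ≤ S := by
      intro t
      have h1 : P t ≤ ∑ i : Fin n, ∏ l, |x ((Fin.cons 0 t : Fin (m + 1) → Fin n) l + i)| := by
        refine Finset.sum_le_sum fun i _ => ?_
        calc (∏ l, x ((Fin.cons 0 t : Fin (m + 1) → Fin n) l + i)) ≤ |∏ l, x ((Fin.cons 0 t : Fin (m + 1) → Fin n) l + i)| := le_abs_self _
          _ = ∏ l, |x ((Fin.cons 0 t : Fin (m + 1) → Fin n) l + i)| := by rw [Finset.abs_prod]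
      have h2 : ∀ i : Fin n, ∏ l, |x ((Fin.cons 0 t : Fin (m + 1) → Fin n) l + i)|
          ≤ ∑ l : Fin (m + 1), (1 / ((m + 1 : ℕ) : ℝ)) * x ((Fin.cons 0 t : Fin (m + 1) → Fin n) l + i) ^ (m + 1) := by
        intro i
        have := amgm_abs_prod (m + 1) (Nat.succ_pos m)
          (fun l => x ((Fin.cons 0 t : Fin (m + 1) → Fin n) l + i))
        simpa [hm.pow_abs] using this
      have h3 : ∑ i : Fin n, ∏ l, |x ((Fin.cons 0 t : Fin (m + 1) → Fin n) l + i)|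
          ≤ ∑ i : Fin n, ∑ l : Fin (m + 1),
              (1 / ((m + 1 : ℕ) : ℝ)) * x ((Fin.cons 0 t : Fin (m + 1) → Fin n) l + i) ^ (m + 1) :=
        Finset.sum_le_sum fun i _ => h2 i
      have h4 : ∑ i : Fin n, ∑ l : Fin (m + 1),
          (1 / ((m + 1 : ℕ) : ℝ)) * x ((Fin.cons 0 t : Fin (m + 1) → Fin n) l + i) ^ (m + 1) = S := by
        rw [Finset.sum_comm]
        have hinner : ∀ l : Fin (m + 1),
            ∑ i : Fin n, (1 / ((m + 1 : ℕ) : ℝ)) * x ((Fin.cons 0 t : Fin (m + 1) → Fin n) l + i) ^ (m + 1)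
              = (1 / ((m + 1 : ℕ) : ℝ)) * S := by
          intro l
          rw [← Finset.mul_sum]
          congr 1
          exact Fintype.sum_equiv (Equiv.addLeft ((Fin.cons 0 t : Fin (m + 1) → Fin n) l)) _ _ (fun i => rfl)
        rw [Finset.sum_congr rfl fun l _ => hinner l]
        simp only [Finset.sum_const, Finset.card_univ, Fintype.card_fin, nsmul_eq_mul]
        field_simp
      linarith
    -- P at t = 0 equals S
    have hP0 : P (fun _ => 0) = S := by
      simp only [hP, hS]
      refine Finset.sum_congr rfl fun i _ => ?_
      have : ∀ l : Fin (m + 1), (Fin.cons 0 (fun _ => 0) : Fin (m + 1) → Fin n) l + i = i := by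
        intro l
        refine Fin.cases ?_ ?_ l <;> simp
      rw [Finset.prod_congr rfl fun l _ => by rw [this l]]
      simp
    have hmain : ∀ t, A (Fin.cons 0 t) * S ≤ A (Fin.cons 0 t) * P t := by
      intro t
      by_cases ht : t = fun _ => 0
      · subst ht; rw [hP0]
      · exact mul_le_mul_of_nonpos_left (hPle t) (hassoc t ht)
    calc (0 : ℝ) ≤ (∑ t : Fin m → Fin n, A (Fin.cons 0 t)) * S := mul_nonneg hlam hS0
      _ = ∑ t : Fin m → Fin n, A (Fin.cons 0 t) * S := by rw [Finset.sum_mul]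
      _ ≤ ∑ t : Fin m → Fin n, A (Fin.cons 0 t) * P t := Finset.sum_le_sum fun t _ => hmain t
end

section
/- Let m and n be even, and A ∈ C_{m,n} a circulant tensor whose associated tensor Ā_1 is negatively alternative. Then A is positive semi-definite if and only if λ_{n/2}(A) ≥ 0. -/
open BigOperators Finset Fin.NatCast

lemma amgm_aux (N : ℕ) (a : Fin (N + 1) → ℝ) (ha : ∀ i, 0 ≤ a i) :
    ∏ i, a i ≤ (∑ i, a i ^ (N + 1)) / (N + 1) := by
  have hw' : ∑ _i : Fin (N + 1), ((N : ℝ) + 1)⁻¹ = 1 := by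
    rw [Finset.sum_const, Finset.card_univ, Fintype.card_fin, nsmul_eq_mul]
    push_cast
    field_simp
  have key := Real.geom_mean_le_arith_mean_weighted Finset.univ
      (fun _ => ((N : ℝ) + 1)⁻¹) (fun i => a i ^ (N + 1))
      (fun i _ => by positivity) hw' (fun i _ => pow_nonneg (ha i) _)
  have h1 : ∀ i : Fin (N + 1), (a i ^ (N + 1)) ^ (((N : ℝ) + 1)⁻¹) = a i := by
    intro i
    rw [← Real.rpow_natCast (a i) (N + 1), ← Real.rpow_mul (ha i)]
    push_cast
    rw [mul_inv_cancel₀ (by positivity), Real.rpow_one]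
  calc ∏ i, a i = ∏ i, (a i ^ (N + 1)) ^ (((N : ℝ) + 1)⁻¹) := by
        exact (Finset.prod_congr rfl fun i _ => h1 i).symm
    _ ≤ ∑ i, ((N : ℝ) + 1)⁻¹ * a i ^ (N + 1) := key
    _ = (∑ i, a i ^ (N + 1)) / (N + 1) := by
        rw [← Finset.mul_sum, div_eq_inv_mul]

def consEquiv (m n : ℕ) [NeZero n] : (Fin n × (Fin m → Fin n)) ≃ (Fin (m + 1) → Fin n) where
  toFun := fun p => Fin.cons p.1 (fun i => p.1 + p.2 i)
  invFun := fun j => (j 0, fun i => j i.succ - j 0)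
  left_inv := by
    rintro ⟨k, t⟩
    simp
  right_inv := by
    intro j
    funext l
    induction l using Fin.cases with
    | zero => simp
    | succ i => simp

/-- Let the order `m+1` and dimension `n` be even, and `A ∈ C_{m+1,n}` a circulant tensor
whose associated tensor `Ā₁` is negatively alternative. Then `A` is positive
semi-definite iff `λ_{n/2}(A) ≥ 0`. -/
theorem stmt_16 (m n : ℕ) [NeZero n] (hm : Even (m + 1)) (hn : Even n)
    (A : (Fin (m + 1) → Fin n) → ℝ)
    (hA : ∀ j : Fin (m + 1) → Fin n, A j = A (fun l => j l + 1))
    (hassoc : ∀ t : Fin m → Fin n, t ≠ (fun _ => 0) →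
      A (Fin.cons 0 t) * (-1 : ℝ) ^ (∑ l, (t l : ℕ)) ≤ 0) :
    (∀ x : Fin n → ℝ, 0 ≤ ∑ j : Fin (m + 1) → Fin n, A j * ∏ l, x (j l)) ↔
      0 ≤ ∑ t : Fin m → Fin n, A (Fin.cons 0 t) * (-1 : ℝ) ^ (∑ l, (t l : ℕ)) := by
  classical
  have hn0 : 0 < n := Nat.pos_of_ne_zero (NeZero.ne n)
  -- shift invariance
  have hshiftN : ∀ (c : ℕ) (j : Fin (m + 1) → Fin n),
      A (fun l => j l + (c : Fin n)) = A j := by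
    intro c
    induction c with
    | zero => intro j; simp
    | succ c ih =>
      intro j
      have hfun : (fun l => j l + ((c + 1 : ℕ) : Fin n))
          = (fun l => (j l + (c : Fin n)) + 1) := by
        funext l; rw [add_assoc]; congr 1; ext; simp [Fin.val_add, Fin.val_natCast, Nat.add_mod]
      rw [hfun, ← hA, ih]
  have hshift : ∀ (c : Fin n) (j : Fin (m + 1) → Fin n),
      A (fun l => j l + c) = A j := by
    intro c j
    have := hshiftN c.val j
    rwa [Fin.cast_val_eq_self] at this
  -- the equivalence
  have hsum : ∀ f : (Fin (m + 1) → Fin n) → ℝ,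
      ∑ j, f j = ∑ k : Fin n, ∑ t : Fin m → Fin n,
        f (Fin.cons k (fun i => k + t i)) := by
    intro f
    rw [← Equiv.sum_comp (consEquiv m n) f, Fintype.sum_prod_type]
    rfl
  have hcons : ∀ (k : Fin n) (t : Fin m → Fin n),
      Fin.cons k (fun i => k + t i) = (fun l => (Fin.cons 0 t : Fin (m + 1) → Fin n) l + k) := by
    intro k t
    funext l
    induction l using Fin.cases with
    | zero => simp
    | succ i => simp [add_comm]
  have hAcons : ∀ (k : Fin n) (t : Fin m → Fin n),
      A (Fin.cons k (fun i => k + t i)) = A (Fin.cons 0 t) := by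
    intro k t
    rw [hcons, hshift]
  -- parity facts
  have hmod : ∀ x : ℕ, ((-1 : ℝ)) ^ (x % n) = (-1) ^ x := by
    intro x
    conv_rhs => rw [← Nat.mod_add_div x n]
    rw [pow_add, pow_mul, hn.neg_one_pow, one_pow, mul_one]
  have hval : ∀ a b : Fin n,
      ((-1 : ℝ)) ^ (((a + b : Fin n) : ℕ)) = (-1) ^ (a : ℕ) * (-1) ^ (b : ℕ) := by
    intro a b
    rw [Fin.val_add, hmod, pow_add]
  constructor
  · -- PSD → λ ≥ 0
    intro h
    have h2 := h (fun i => (-1 : ℝ) ^ (i : ℕ))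
    rw [hsum (fun j => A j * ∏ l, (-1 : ℝ) ^ ((j l : ℕ)))] at h2
    have hterm : ∀ (k : Fin n) (t : Fin m → Fin n),
        A (Fin.cons k (fun i => k + t i)) *
          ∏ l, ((-1 : ℝ)) ^ (((Fin.cons k (fun i => k + t i) : Fin (m + 1) → Fin n) l : ℕ)) =
        A (Fin.cons 0 t) * (-1 : ℝ) ^ (∑ l, (t l : ℕ)) := by
      intro k t
      rw [hAcons]
      congr 1
      rw [hcons]
      calc ∏ l, ((-1 : ℝ)) ^ ((((Fin.cons 0 t : Fin (m + 1) → Fin n) l + k : Fin n) : ℕ))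
          = ∏ l, (((-1 : ℝ)) ^ (((Fin.cons 0 t : Fin (m + 1) → Fin n) l : ℕ)) * (-1) ^ (k : ℕ)) :=
            Finset.prod_congr rfl fun l _ => hval _ _
        _ = (∏ l, ((-1 : ℝ)) ^ (((Fin.cons 0 t : Fin (m + 1) → Fin n) l : ℕ))) *
              ((-1 : ℝ) ^ (k : ℕ)) ^ (m + 1) := by
            rw [Finset.prod_mul_distrib, Finset.prod_const, Finset.card_univ,
              Fintype.card_fin]
        _ = ∏ l, ((-1 : ℝ)) ^ (((Fin.cons 0 t : Fin (m + 1) → Fin n) l : ℕ)) := by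
            rw [← pow_mul, (hm.mul_left (k : ℕ)).neg_one_pow, mul_one]
        _ = (-1 : ℝ) ^ (∑ l, (t l : ℕ)) := by
            rw [Fin.prod_univ_succ]
            simp [Finset.prod_pow_eq_pow_sum]
    rw [Finset.sum_congr rfl (fun k _ => Finset.sum_congr rfl fun t _ => hterm k t),
      Finset.sum_const, Finset.card_univ, Fintype.card_fin, nsmul_eq_mul] at h2
    have hnpos : (0 : ℝ) < n := by exact_mod_cast hn0
    exact nonneg_of_mul_nonneg_right h2 hnpos
  · -- λ ≥ 0 → PSD
    intro hS x
    set B : (Fin m → Fin n) → ℝ := fun t => A (Fin.cons 0 t) with hB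
    set c0 : Fin m → Fin n := fun _ => 0 with hc0
    -- diagonal dominance
    have hdom : ∑ t ∈ Finset.univ.erase c0, |B t| ≤ B c0 := by
      have hsplit : ∑ t : Fin m → Fin n, B t * (-1 : ℝ) ^ (∑ l, (t l : ℕ))
          = B c0 + ∑ t ∈ Finset.univ.erase c0, B t * (-1 : ℝ) ^ (∑ l, (t l : ℕ)) := by
        rw [← Finset.add_sum_erase _ _ (Finset.mem_univ c0)]
        simp [hc0]
      have habs : ∀ t ∈ Finset.univ.erase c0,
          |B t| = -(B t * (-1 : ℝ) ^ (∑ l, (t l : ℕ))) := by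
        intro t ht
        have ht' : t ≠ c0 := (Finset.mem_erase.mp ht).1
        have h1 := hassoc t ht'
        have h2 : |B t * (-1 : ℝ) ^ (∑ l, (t l : ℕ))| = |B t| := by
          rw [abs_mul, abs_pow, abs_neg, abs_one, one_pow, mul_one]
        rw [← h2, abs_of_nonpos h1]
      rw [Finset.sum_congr rfl habs, Finset.sum_neg_distrib]
      rw [hsplit] at hS
      linarith
    -- rewrite the quartic form
    have hprodx : ∀ (k : Fin n) (t : Fin m → Fin n),
        ∏ l, x ((Fin.cons k (fun i => k + t i) : Fin (m + 1) → Fin n) l) = x k * ∏ i, x (k + t i) := by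
      intro k t
      rw [Fin.prod_univ_succ]
      simp
    have hform : ∑ j, A j * ∏ l, x (j l)
        = ∑ t : Fin m → Fin n, B t * ∑ k : Fin n, x k * ∏ i, x (k + t i) := by
      rw [hsum (fun j => A j * ∏ l, x (j l))]
      rw [Finset.sum_comm]
      refine Finset.sum_congr rfl fun t _ => ?_
      rw [Finset.mul_sum]
      exact Finset.sum_congr rfl fun k _ => by rw [hAcons, hprodx]
    set C : (Fin m → Fin n) → ℝ := fun t => ∑ k : Fin n, x k * ∏ i, x (k + t i) with hC
    set P : ℝ := ∑ k : Fin n, x k ^ (m + 1) with hP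
    have hP0 : 0 ≤ P := Finset.sum_nonneg fun k _ => hm.pow_nonneg _
    have hshiftsum : ∀ (c : Fin n) (g : Fin n → ℝ), ∑ k, g (k + c) = ∑ k, g k := by
      intro c g
      exact Fintype.sum_equiv (Equiv.addRight c) _ _ fun k => rfl
    have habsP : ∀ k : Fin n, |x k| ^ (m + 1) = x k ^ (m + 1) := fun k => hm.pow_abs _
    have hCb : ∀ t : Fin m → Fin n, |C t| ≤ P := by
      intro t
      calc |C t| ≤ ∑ k, |x k * ∏ i, x (k + t i)| := Finset.abs_sum_le_sum_abs _ _
        _ ≤ ∑ k, (x k ^ (m + 1) + ∑ i, x (k + t i) ^ (m + 1)) / (m + 1) := by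
            refine Finset.sum_le_sum fun k _ => ?_
            have := amgm_aux m (Fin.cons |x k| (fun i => |x (k + t i)|))
              (by intro i; induction i using Fin.cases <;> simp [abs_nonneg])
            rw [Fin.prod_univ_succ, Fin.sum_univ_succ] at this
            simp only [Fin.cons_zero, Fin.cons_succ] at this
            calc |x k * ∏ i, x (k + t i)| = |x k| * ∏ i, |x (k + t i)| := by
                  rw [abs_mul, Finset.abs_prod]
              _ ≤ (|x k| ^ (m + 1) + ∑ i, |x (k + t i)| ^ (m + 1)) / (m + 1) := this
              _ = (x k ^ (m + 1) + ∑ i, x (k + t i) ^ (m + 1)) / (m + 1) := by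
                  rw [habsP]
                  congr 2
                  exact Finset.sum_congr rfl fun i _ => habsP _
        _ = P := by
            rw [← Finset.sum_div, Finset.sum_add_distrib, ← hP, Finset.sum_comm]
            have : ∀ i : Fin m, ∑ k, x (k + t i) ^ (m + 1) = P := fun i =>
              hshiftsum (t i) (fun k => x k ^ (m + 1))
            rw [Finset.sum_congr (rfl : (univ : Finset (Fin m)) = univ) fun i _ => this i,
              Finset.sum_const, Finset.card_univ, Fintype.card_fin, nsmul_eq_mul]
            field_simp
            ring
    -- C at c0 equals P
    have hCc0 : C c0 = P := by
      rw [hC, hP]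
      refine Finset.sum_congr rfl fun k _ => ?_
      simp only [hc0, add_zero, Finset.prod_const, Finset.card_univ, Fintype.card_fin]
      rw [← pow_succ']
    -- assemble
    rw [hform]
    rw [← Finset.add_sum_erase _ (fun t => B t * C t) (Finset.mem_univ c0), hCc0]
    have hlow : ∀ t ∈ Finset.univ.erase c0, -( |B t| * P) ≤ B t * C t := by
      intro t _
      have h1 : |B t * C t| ≤ |B t| * P := by
        rw [abs_mul]
        exact mul_le_mul_of_nonneg_left (hCb t) (abs_nonneg _)
      have := neg_abs_le (B t * C t)
      linarith
    have hsum_low : -((∑ t ∈ Finset.univ.erase c0, |B t|) * P)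
        ≤ ∑ t ∈ Finset.univ.erase c0, B t * C t := by
      rw [Finset.sum_mul, ← Finset.sum_neg_distrib]
      exact Finset.sum_le_sum hlow
    nlinarith [mul_le_mul_of_nonneg_right hdom hP0]
end

section
/- Let m be even and A ∈ C_{m,n} a circulant tensor with diagonal entry c_0 and root tensor A_1 = (α_{j_1...j_{m-1}}). If c_0 ≥ Σ_{(j_1,...,j_{m-1}) ≠ (1,...,1)} |α_{j_1...j_{m-1}}| (equivalently 2c_0 ≥ Σ over all indices of |α|), then A is positive semi-definite. -/
open BigOperators

/-- AM-GM: product of N nonnegative reals ≤ sum of N-th powers divided by N. -/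
lemma amgm_pow (N : ℕ) (hN : 0 < N) (a : Fin N → ℝ) (ha : ∀ l, 0 ≤ a l) :
    (∏ l, a l) ≤ (∑ l, a l ^ N) / N := by
  have hNR : (N : ℝ) ≠ 0 := Nat.cast_ne_zero.mpr hN.ne'
  have h := Real.geom_mean_le_arith_mean_weighted Finset.univ
      (fun _ : Fin N => 1 / N) (fun l => a l ^ N)
      (fun i _ => by positivity)
      (by simp [Finset.sum_const, Finset.card_univ]; field_simp)
      (fun i _ => pow_nonneg (ha i) N)
  have hz : ∀ l : Fin N, (a l ^ N) ^ ((1:ℝ) / N) = a l := by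
    intro l
    rw [← Real.rpow_natCast (a l) N, ← Real.rpow_mul (ha l), mul_one_div,
      div_self hNR, Real.rpow_one]
  calc (∏ l, a l) = ∏ l, (a l ^ N) ^ ((1:ℝ)/N) :=
        (Finset.prod_congr rfl fun l _ => (hz l).symm)
    _ ≤ ∑ l, (1/(N:ℝ)) * a l ^ N := h
    _ = (∑ l, a l ^ N) / N := by rw [← Finset.mul_sum]; ring

/-- Let the order `m+1` be even and `A ∈ C_{m+1,n}` a circulant tensor with diagonal entry
`c₀` and root tensor `A₁`. If `c₀ ≥ ∑_{(j_1,...,j_m) ≠ (1,...,1)} |α_{j_1...j_m}|`, then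
`A` is positive semi-definite. -/
theorem stmt_17 (m n : ℕ) [NeZero n] (hm : Even (m + 1))
    (A : (Fin (m + 1) → Fin n) → ℝ)
    (hA : ∀ j : Fin (m + 1) → Fin n, A j = A (fun l => j l + 1))
    (hdom : (∑ t : Fin m → Fin n, if t = (fun _ => 0) then 0 else |A (Fin.cons 0 t)|)
      ≤ A (fun _ => 0)) :
    ∀ x : Fin n → ℝ, 0 ≤ ∑ j : Fin (m + 1) → Fin n, A j * ∏ l, x (j l) := by
  intro x
  -- shift invariance by natural numbers
  open Fin.NatCast in
  have shiftNat : ∀ (k : ℕ) (j : Fin (m + 1) → Fin n),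
      A j = A (fun l => j l + (k : Fin n)) := by
    intro k
    induction k with
    | zero => intro j; simp
    | succ k ih =>
      intro j
      rw [ih j, hA (fun l => j l + (k : Fin n))]
      congr 1
      funext l
      push_cast
      exact add_assoc _ _ _
  -- shift invariance by any element of Fin n
  open Fin.NatCast in
  have shift : ∀ (k : Fin n) (j : Fin (m + 1) → Fin n),
      A j = A (fun l => j l + k) := by
    intro k j
    have := shiftNat k.val j
    rwa [Fin.cast_val_eq_self k] at this
  -- root form
  have root : ∀ j : Fin (m + 1) → Fin n,
      A j = A (Fin.cons 0 (fun l => j l.succ - j 0)) := by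
    intro j
    rw [shift (-(j 0)) j]
    congr 1
    funext l
    refine Fin.cases ?_ (fun l => ?_) l
    · simp
    · simp [sub_eq_add_neg]
  -- the reindexing equivalence
  let e : Fin n × (Fin m → Fin n) ≃ (Fin (m + 1) → Fin n) :=
    { toFun := fun p => Fin.cons p.1 (fun l => p.2 l + p.1)
      invFun := fun j => (j 0, fun l => j l.succ - j 0)
      left_inv := by
        rintro ⟨i, t⟩
        simp
      right_inv := by
        intro j
        funext l
        refine Fin.cases ?_ (fun l => ?_) l <;> simp }
  have key : (∑ j : Fin (m + 1) → Fin n, A j * ∏ l, x (j l))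
      = ∑ t : Fin m → Fin n, A (Fin.cons 0 t) * ∑ i, x i * ∏ l, x (t l + i) := by
    rw [← Equiv.sum_comp e (fun j => A j * ∏ l, x (j l)), Fintype.sum_prod_type,
      Finset.sum_comm]
    refine Finset.sum_congr rfl fun t _ => ?_
    rw [Finset.mul_sum]
    refine Finset.sum_congr rfl fun i _ => ?_
    have h1 : A (e (i, t)) = A (Fin.cons 0 t) := by
      rw [root (e (i, t))]
      congr 1
      funext l
      refine Fin.cases ?_ (fun l => ?_) l <;> simp [e]
    have h2 : (∏ l, x (e (i, t) l)) = x i * ∏ l, x (t l + i) := by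
      rw [Fin.prod_univ_succ (fun l : Fin (m + 1) => x (e (i, t) l))]
      simp [e]
    rw [h1, h2]
  rw [key]
  -- key bound on partial sums
  set K : ℝ := ∑ i, |x i| ^ (m + 1) with hK
  have hK0 : 0 ≤ K := Finset.sum_nonneg fun i _ => by positivity
  have bound : ∀ t : Fin m → Fin n, |∑ i, x i * ∏ l, x (t l + i)| ≤ K := by
    intro t
    set c : Fin (m + 1) → Fin n := Fin.cons 0 t with hc
    have hterm : ∀ i : Fin n, |x i * ∏ l : Fin m, x (t l + i)|
        = ∏ l : Fin (m + 1), |x (c l + i)| := by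
      intro i
      rw [Fin.prod_univ_succ (fun l : Fin (m + 1) => |x (c l + i)|)]
      simp [hc, abs_mul, Finset.abs_prod]
    calc |∑ i, x i * ∏ l, x (t l + i)| ≤ ∑ i, |x i * ∏ l, x (t l + i)| :=
          Finset.abs_sum_le_sum_abs _ _
      _ = ∑ i, ∏ l : Fin (m + 1), |x (c l + i)| :=
          Finset.sum_congr rfl fun i _ => hterm i
      _ ≤ ∑ i, (∑ l : Fin (m + 1), |x (c l + i)| ^ (m + 1)) / ((m + 1 : ℕ) : ℝ) :=
          Finset.sum_le_sum fun i _ =>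
            amgm_pow (m + 1) (Nat.succ_pos m) (fun l => |x (c l + i)|)
              (fun l => abs_nonneg _)
      _ = (∑ l : Fin (m + 1), ∑ i, |x (c l + i)| ^ (m + 1)) / ((m + 1 : ℕ) : ℝ) := by
          rw [← Finset.sum_div, Finset.sum_comm]
      _ = K := by
          have hl : ∀ l : Fin (m + 1),
              (∑ i, |x (c l + i)| ^ (m + 1)) = K :=
            fun l => Equiv.sum_comp (Equiv.addLeft (c l)) (fun i => |x i| ^ (m + 1))
          simp only [hl, Finset.sum_const, Finset.card_univ, Fintype.card_fin, nsmul_eq_mul]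
          field_simp
  -- value at t = 0
  have hzero : (∑ i, x i * ∏ l : Fin m, x ((fun _ => (0:Fin n)) l + i)) = K := by
    refine Finset.sum_congr rfl fun i _ => ?_
    simp only [zero_add, Finset.prod_const, Finset.card_univ, Fintype.card_fin]
    rw [← pow_succ']
    exact (hm.pow_abs (x i)).symm
  have hc : A (Fin.cons (0:Fin n) (fun _ => (0:Fin n))) = A (fun _ => 0) := by
    congr 1
    funext l
    refine Fin.cases rfl (fun l => rfl) l
  -- split the sum
  rw [← Finset.sum_erase_add _ _ (Finset.mem_univ (fun _ => (0:Fin n)))]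
  have hmain : A (Fin.cons (0:Fin n) (fun _ => (0:Fin n))) *
      (∑ i, x i * ∏ l : Fin m, x ((fun _ => (0:Fin n)) l + i)) = A (fun _ => 0) * K := by
    rw [hzero, hc]
  rw [hmain]
  have hD : (∑ t ∈ Finset.univ.erase (fun _ => (0:Fin n)), |A (Fin.cons 0 t)|)
      ≤ A (fun _ => 0) := by
    have heq : (∑ t : Fin m → Fin n, if t = (fun _ => 0) then 0 else |A (Fin.cons 0 t)|)
        = ∑ t ∈ Finset.univ.erase (fun _ => (0:Fin n)), |A (Fin.cons 0 t)| := by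
      rw [← Finset.add_sum_erase _ _ (Finset.mem_univ (fun _ => (0:Fin n)))]
      rw [if_pos rfl, zero_add]
      exact Finset.sum_congr rfl fun t ht => if_neg (Finset.ne_of_mem_erase ht)
    rw [heq] at hdom
    exact hdom
  have hrest : ∀ t ∈ Finset.univ.erase (fun _ => (0:Fin n)),
      -(|A (Fin.cons 0 t)| * K) ≤ A (Fin.cons 0 t) * ∑ i, x i * ∏ l, x (t l + i) := by
    intro t _
    have h1 : |A (Fin.cons 0 t) * ∑ i, x i * ∏ l, x (t l + i)| ≤ |A (Fin.cons 0 t)| * K := by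
      rw [abs_mul]
      exact mul_le_mul_of_nonneg_left (bound t) (abs_nonneg _)
    linarith [neg_abs_le (A (Fin.cons 0 t) * ∑ i, x i * ∏ l, x (t l + i))]
  have hsum : -(A (fun _ => (0:Fin n)) * K) ≤
      ∑ t ∈ Finset.univ.erase (fun _ => (0:Fin n)),
        A (Fin.cons 0 t) * ∑ i, x i * ∏ l, x (t l + i) := by
    calc -(A (fun _ => (0:Fin n)) * K)
        ≤ -((∑ t ∈ Finset.univ.erase (fun _ => (0:Fin n)), |A (Fin.cons 0 t)|) * K) := by
          exact neg_le_neg (mul_le_mul_of_nonneg_right hD hK0)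
      _ = ∑ t ∈ Finset.univ.erase (fun _ => (0:Fin n)), -(|A (Fin.cons 0 t)| * K) := by
          rw [Finset.sum_mul, ← Finset.sum_neg_distrib]
      _ ≤ _ := Finset.sum_le_sum hrest
  linarith
end

section
/- Let m be even, A ∈ C_{m,n} a doubly circulant tensor whose root tensor A_1 is also doubly circulant, with A_{11} ∈ T_{m-2,n} the root tensor of A_1. Then for all x ∈ ℝ^n, A x^m = (Σ_{k=1}^n x_k)² · A_{11} x^{m-2}. Consequently: (a) if A_{11} is positive semi-definite then A is positive semi-definite; (b) if A is positive semi-definite then A_{11} x^{m-2} ≥ 0 for every x ∈ ℝ^n with Σ_{k=1}^n x_k ≠ 0. -/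
open BigOperators

open Fin.NatCast in
private lemma row_eq19 {n k : ℕ} [NeZero n] (B : (Fin (k + 1) → Fin n) → ℝ)
    (hB : ∀ j, B j = B (fun l => j l + 1))
    (hB0 : ∀ t, B (Fin.cons 0 t) = B (Fin.cons 0 (fun l => t l + 1)))
    (i : Fin n) (t : Fin k → Fin n) : B (Fin.cons i t) = B (Fin.cons 0 t) := by
  have key : ∀ c : ℕ, ∀ t : Fin k → Fin n,
      B (Fin.cons ((c : ℕ) : Fin n) t) = B (Fin.cons 0 t) := by
    intro c
    induction c with
    | zero => intro t; norm_num
    | succ c ih =>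
      intro t
      have h1 : B (Fin.cons (((c + 1 : ℕ) : Fin n)) t)
          = B (Fin.cons ((c : ℕ) : Fin n) (fun l => t l - 1)) := by
        rw [hB (Fin.cons ((c : ℕ) : Fin n) (fun l => t l - 1))]
        congr 1
        funext l
        refine Fin.cases ?_ ?_ l
        · simp
        · intro j; simp
      rw [h1, ih, hB0]
      congr 1
      funext l; simp
  calc B (Fin.cons i t) = B (Fin.cons ((i.val : ℕ) : Fin n) t) := by
        rw [Fin.cast_val_eq_self]
    _ = B (Fin.cons 0 t) := key _ t

private lemma split19 {n k : ℕ} [NeZero n] (f : (Fin (k + 1) → Fin n) → ℝ) :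
    ∑ j : Fin (k + 1) → Fin n, f j
      = ∑ i : Fin n, ∑ t : Fin k → Fin n, f (Fin.cons i t) := by
  rw [← (Fin.consEquiv (fun _ : Fin (k + 1) => Fin n)).sum_comp f, Fintype.sum_prod_type]
  rfl

/-- Let the order `m+2` be even and `A ∈ C_{m+2,n}` a doubly circulant tensor (`A` and its
root tensor `A₁` are circulant) whose root tensor `A₁` is itself doubly circulant (its
root tensor `A₁₁` is circulant). Then `A x^{m+2} = (∑_k x_k)² · A₁₁ x^m` for all `x ∈ ℝⁿ`;
consequently (a) if `A₁₁` is positive semi-definite then so is `A`, and (b) if `A` is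
positive semi-definite then `A₁₁ x^m ≥ 0` whenever `∑_k x_k ≠ 0`. -/
theorem stmt_19 (m n : ℕ) [NeZero n] (hm : Even (m + 2))
    (A : (Fin (m + 2) → Fin n) → ℝ)
    (hA : ∀ j : Fin (m + 2) → Fin n, A j = A (fun l => j l + 1))
    (hA1 : ∀ t : Fin (m + 1) → Fin n,
      A (Fin.cons 0 t) = A (Fin.cons 0 (fun l => t l + 1)))
    (hA11 : ∀ t : Fin m → Fin n,
      A (Fin.cons 0 (Fin.cons 0 t)) = A (Fin.cons 0 (Fin.cons 0 (fun l => t l + 1)))) :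
    (∀ x : Fin n → ℝ,
      ∑ j : Fin (m + 2) → Fin n, A j * ∏ l, x (j l)
        = (∑ k, x k) ^ 2 * ∑ t : Fin m → Fin n, A (Fin.cons 0 (Fin.cons 0 t)) * ∏ l, x (t l)) ∧
    ((∀ x : Fin n → ℝ,
        0 ≤ ∑ t : Fin m → Fin n, A (Fin.cons 0 (Fin.cons 0 t)) * ∏ l, x (t l)) →
      ∀ x : Fin n → ℝ, 0 ≤ ∑ j : Fin (m + 2) → Fin n, A j * ∏ l, x (j l)) ∧
    ((∀ x : Fin n → ℝ, 0 ≤ ∑ j : Fin (m + 2) → Fin n, A j * ∏ l, x (j l)) →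
      ∀ x : Fin n → ℝ, (∑ k, x k) ≠ 0 →
        0 ≤ ∑ t : Fin m → Fin n, A (Fin.cons 0 (Fin.cons 0 t)) * ∏ l, x (t l)) := by
  have main : ∀ x : Fin n → ℝ,
      ∑ j : Fin (m + 2) → Fin n, A j * ∏ l, x (j l)
        = (∑ k, x k) ^ 2 * ∑ t : Fin m → Fin n, A (Fin.cons 0 (Fin.cons 0 t)) * ∏ l, x (t l) := by
    intro x
    have step1 : ∑ j : Fin (m + 2) → Fin n, A j * ∏ l, x (j l)
        = (∑ k, x k) * ∑ t : Fin (m + 1) → Fin n, A (Fin.cons 0 t) * ∏ l, x (t l) := by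
      rw [split19 (fun j => A j * ∏ l, x (j l)), Finset.sum_mul]
      refine Finset.sum_congr rfl fun i _ => ?_
      rw [Finset.mul_sum]
      refine Finset.sum_congr rfl fun t _ => ?_
      rw [row_eq19 A hA hA1 i t, Fin.prod_univ_succ]
      simp only [Fin.cons_zero, Fin.cons_succ]
      ring
    have step2 : ∑ t : Fin (m + 1) → Fin n, A (Fin.cons 0 t) * ∏ l, x (t l)
        = (∑ k, x k) * ∑ t : Fin m → Fin n, A (Fin.cons 0 (Fin.cons 0 t)) * ∏ l, x (t l) := by
      rw [split19 (fun t => A (Fin.cons 0 t) * ∏ l, x (t l)), Finset.sum_mul]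
      refine Finset.sum_congr rfl fun i _ => ?_
      rw [Finset.mul_sum]
      refine Finset.sum_congr rfl fun t _ => ?_
      rw [row_eq19 (fun s => A (Fin.cons 0 s)) hA1 hA11 i t, Fin.prod_univ_succ]
      simp only [Fin.cons_zero, Fin.cons_succ]
      ring
    rw [step1, step2]; ring
  refine ⟨main, fun h x => ?_, fun h x hx => ?_⟩
  · rw [main x]
    exact mul_nonneg (sq_nonneg _) (h x)
  · have h0 := h x
    rw [main x] at h0
    have hpos : (0 : ℝ) < (∑ k, x k) ^ 2 := by positivity
    exact nonneg_of_mul_nonneg_right h0 hpos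
end
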